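/- arXiv:2311.10878 — 18 statements merged into one kernel-verified Lean document; each statement's English description precedes it below -/
import Mathlib

section
/- Let f : ℝ⁺ → ℝ⁺ be a function such that f(x) + f(f(x)) = 2x for all x > 0. Then f(x) = x for all x > 0. -/
theorem stmt_0 (f : ℝ → ℝ) (hpos : ∀ x > 0, f x > 0)
    (hfe : ∀ x > 0, f x + f (f x) = 2 * x) :
    ∀ x > 0, f x = x := by
  intro x hx
  set h : ℕ → ℝ := fun n => f^[n] x with hh
  have hp : ∀ n, h n > 0 := by
    intro n
    induction n with
    | zero => simpa [hh] using hx
    | succ n ih =>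
      have : h (n+1) = f (h n) := by simp [hh, Function.iterate_succ_apply']
      rw [this]; exact hpos _ ih
  have hstep : ∀ n, h (n+1) = f (h n) := by
    intro n; simp [hh, Function.iterate_succ_apply']
  have hrec : ∀ n, h (n+1) - h n = (-2)^n * (f x - x) := by
    intro n
    induction n with
    | zero => simp [hstep 0, hh]
    | succ n ih =>
      have key : h (n+1) + h (n+2) = 2 * h n := by
        have := hfe (h n) (hp n)
        rw [hstep n, hstep (n+1), hstep n]
        exact this
      have : h (n+2) - h (n+1) = -2 * (h (n+1) - h n) := by linarith
      rw [this, ih]; ring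
  have hsum : ∀ n, h n = x + (f x - x) * (1 - (-2)^n) / 3 := by
    intro n
    induction n with
    | zero => simp [hh]
    | succ n ih =>
      have := hrec n
      have h2 : ((-2):ℝ)^(n+1) = -2 * (-2)^n := by ring
      rw [h2]
      nlinarith [this, ih]
  by_contra hne
  have hd : f x - x ≠ 0 := fun h' => hne (by linarith [sub_eq_zero.mp h'])
  set d := f x - x with hdd
  have hpow : ∀ m, ((-2):ℝ)^(2*m) = 4^m := by
    intro m; rw [pow_mul]; norm_num
  rcases lt_or_gt_of_ne hd with hneg | hposd
  · -- d < 0 : use odd n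
    obtain ⟨m, hm⟩ := pow_unbounded_of_one_lt (3 * x / (-d) / 2) (by norm_num : (1:ℝ) < 4)
    have key := hsum (2*m+1)
    have hpm : ((-2):ℝ)^(2*m+1) = -2 * 4^m := by rw [pow_succ, hpow]; ring
    rw [hpm] at key
    have := hp (2*m+1)
    rw [key] at this
    have h4 : (0:ℝ) < 4^m := by positivity
    have hm3 : 3 * x < -d * (2 * 4^m) := by
      have hnd : 0 < -d := by linarith
      have := (div_lt_iff₀ hnd).mp (by linarith [(div_lt_iff₀ (by norm_num : (0:ℝ)<2)).mp (lt_of_le_of_lt (le_refl _) hm)] : 3 * x / (-d) < 2 * 4^m)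
      linarith
    nlinarith [this, hm3]
  · -- d > 0 : use even n
    obtain ⟨m, hm⟩ := pow_unbounded_of_one_lt (3 * x / d + 1) (by norm_num : (1:ℝ) < 4)
    have key := hsum (2*m)
    rw [hpow] at key
    have := hp (2*m)
    rw [key] at this
    have h4 : (0:ℝ) < 4^m := by positivity
    have hm3 : 3 * x < d * (4^m - 1) := by
      have := (div_lt_iff₀ hposd).mp (by linarith : 3 * x / d < 4^m - 1)
      linarith
    nlinarith [this, hm3]
end

section
/- Let f : [0,∞) → [0,∞) be a function such that f(x) ≥ x for all x ≥ 0 and f(f(x) − x) = 2x for all x ≥ 0. Then f(x) = 2x for all x ≥ 0. -/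
theorem stmt_1 (f : ℝ → ℝ) (hpos : ∀ x ≥ 0, f x ≥ 0)
    (hge : ∀ x ≥ 0, f x ≥ x)
    (hfe : ∀ x ≥ 0, f (f x - x) = 2 * x) :
    ∀ x ≥ 0, f x = 2 * x := by
  intro x hx
  set u : ℕ → ℝ := fun n => Nat.rec x (fun _ y => f y - y) n with hu
  have hu0 : u 0 = x := rfl
  have hus : ∀ n, u (n + 1) = f (u n) - u n := fun n => rfl
  have hnn : ∀ n, 0 ≤ u n := by
    intro n
    induction n with
    | zero => exact hx
    | succ n ih => rw [hus]; linarith [hge (u n) ih]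
  have hrec : ∀ n, u (n + 2) = 2 * u n - u (n + 1) := by
    intro n
    have h1 := hfe (u n) (hnn n)
    have h2 := hus n
    have h3 := hus (n + 1)
    rw [h3, h2, h1]
  set c : ℝ := u 1 - u 0 with hc
  have hv : ∀ n, u (n + 1) - u n = c * (-2) ^ n := by
    intro n
    induction n with
    | zero => simp [hc]
    | succ n ih =>
      have h := hrec n
      have : u (n + 2) - u (n + 1) = -2 * (u (n + 1) - u n) := by linarith
      rw [this, ih]; ring
  have hw : ∀ n, u (n + 1) + 2 * u n = u 1 + 2 * u 0 := by
    intro n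
    induction n with
    | zero => rfl
    | succ n ih => have := hrec n; linarith
  have hUn : ∀ n, 3 * u n = (u 1 + 2 * u 0) - c * (-2) ^ n := by
    intro n
    have h1 := hv n
    have h2 := hw n
    linarith
  have hczero : c = 0 := by
    by_contra hcne
    obtain ⟨m, hm⟩ := pow_unbounded_of_one_lt ((u 1 + 2 * u 0) / |c|)
      (by norm_num : (1 : ℝ) < 4)
    have h4 : (4 : ℝ) ^ m = (2 : ℝ) ^ (2 * m) := by
      rw [pow_mul]; norm_num
    have habs : 0 < |c| := abs_pos.mpr hcne
    have hgt : u 1 + 2 * u 0 < |c| * 2 ^ (2 * m) := by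
      rw [div_lt_iff₀ habs] at hm
      calc u 1 + 2 * u 0 < 4 ^ m * |c| := hm
        _ = |c| * 2 ^ (2 * m) := by rw [h4]; ring
    rcases lt_or_gt_of_ne hcne with hneg | hpos'
    · -- c < 0 : use odd exponent n = 2m+1
      have h1 := hUn (2 * m + 1)
      have h2 := hnn (2 * m + 1)
      have he : ((-2 : ℝ)) ^ (2 * m + 1) = -(2 ^ (2 * m + 1)) := by
        rw [pow_succ, neg_pow, Even.neg_one_pow ⟨m, by ring⟩]
        ring
      have habs' : |c| = -c := abs_of_neg hneg
      rw [he] at h1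
      have hle : (2 : ℝ) ^ (2 * m) ≤ 2 ^ (2 * m + 1) := by
        apply pow_le_pow_right₀ (by norm_num) (by omega)
      nlinarith [mul_le_mul_of_nonneg_left hle (le_of_lt (neg_pos.mpr hneg))]
    · -- c > 0 : use even exponent n = 2m
      have h1 := hUn (2 * m)
      have h2 := hnn (2 * m)
      have he : ((-2 : ℝ)) ^ (2 * m) = 2 ^ (2 * m) := by
        rw [neg_pow, Even.neg_one_pow ⟨m, by ring⟩, one_mul]
      have habs' : |c| = c := abs_of_pos hpos'
      rw [he] at h1
      nlinarith
  have heq : u 1 - u 0 = 0 := by rw [← hc, hczero]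
  have h1 : u 1 = f x - x := by simpa [hu0] using hus 0
  rw [hu0] at heq
  linarith
end

section
/- There is no function f : ℕ⁺ → ℕ⁺ (positive integers to positive integers) satisfying f(n) = f(f(n−1)) + f(f(n+1)) for all integers n ≥ 2. -/
theorem stmt_2 :
    ¬ ∃ f : ℕ → ℕ, (∀ n ≥ 1, 1 ≤ f n) ∧
      (∀ n ≥ 2, f n = f (f (n - 1)) + f (f (n + 1))) := by
  rintro ⟨f, hpos, heq⟩
  -- key growth lemma: ∀ k, ∀ n ≥ k+1, 2^k ≤ f n
  have key : ∀ k n, k + 1 ≤ n → 2 ^ k ≤ f n := by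
    intro k
    induction k with
    | zero => intro n hn; simpa using hpos n hn
    | succ k ih =>
      intro n hn
      have hk : k + 1 ≤ 2 ^ k := Nat.succ_le_of_lt (Nat.lt_two_pow_self (n := k))
      have h1 : 2 ^ k ≤ f (f (n - 1)) := by
        have hA : 2 ^ k ≤ f (n - 1) := ih _ (by omega)
        exact ih _ (by omega)
      have h3 : 2 ^ k ≤ f (f (n + 1)) := by
        have hA : 2 ^ k ≤ f (n + 1) := ih _ (by omega)
        exact ih _ (by omega)
      have he := heq n (by omega)
      have hp : 2 ^ (k + 1) = 2 ^ k + 2 ^ k := by ring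
      omega
  -- strict descent
  have dec : ∀ n, 2 ≤ n → f (n + 1) < f n := by
    intro n hn
    have he := heq n hn
    have h1 : 1 ≤ f (f (n - 1)) := hpos _ (hpos _ (by omega))
    have hp : 1 ≤ f (n + 1) := hpos _ (by omega)
    have h2 : f (n + 1) - 1 < 2 ^ (f (n + 1) - 1) := Nat.lt_two_pow_self
    have h3 : 2 ^ (f (n + 1) - 1) ≤ f (f (n + 1)) := key _ _ (by omega)
    omega
  have desc : ∀ k, f (2 + k) + k ≤ f 2 := by
    intro k
    induction k with
    | zero => simp
    | succ k ih =>
      have := dec (2 + k) (by omega)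
      have h2 : f (2 + (k + 1)) < f (2 + k) := this
      omega
  have := desc (f 2)
  have := hpos (2 + f 2) (by omega)
  omega
end

section
/- Let A be a nonempty subset of ℝ and let g : A → [1,∞) be a bounded function such that for every bounded function f : A → [1,∞) with f ≠ g one has sup_{x∈A} (f(x)/g(x)) = (sup_{x∈A} f(x)) / (inf_{x∈A} g(x)). Then g is constant. -/
theorem stmt_3 (A : Set ℝ) (hA : A.Nonempty) (g : ℝ → ℝ)
    (hg1 : ∀ x ∈ A, 1 ≤ g x) (hgb : BddAbove (g '' A))
    (h : ∀ f : ℝ → ℝ, (∀ x ∈ A, 1 ≤ f x) → BddAbove (f '' A) →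
      (∃ x ∈ A, f x ≠ g x) →
      sSup ((fun x => f x / g x) '' A) = sSup (f '' A) / sInf (g '' A)) :
    ∀ x ∈ A, ∀ y ∈ A, g x = g y := by
  set m := sInf (g '' A) with hm
  set M := sSup (g '' A) with hM
  have hne : (g '' A).Nonempty := hA.image g
  have hbdd_below : BddBelow (g '' A) := ⟨1, by rintro _ ⟨x, hx, rfl⟩; exact hg1 x hx⟩
  have hm1 : 1 ≤ m := le_csInf hne (by rintro _ ⟨x, hx, rfl⟩; exact hg1 x hx)
  have hm0 : 0 < m := lt_of_lt_of_le one_pos hm1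
  have hmle : ∀ x ∈ A, m ≤ g x := fun x hx => csInf_le hbdd_below ⟨x, hx, rfl⟩
  have hleM : ∀ x ∈ A, g x ≤ M := fun x hx => le_csSup hgb ⟨x, hx, rfl⟩
  -- the test function
  set f : ℝ → ℝ := fun x => g x + 1 with hf
  obtain ⟨B, hB⟩ := hgb
  have hfb : BddAbove (f '' A) := ⟨B + 1, by
    rintro _ ⟨x, hx, rfl⟩
    exact add_le_add_left (hB ⟨x, hx, rfl⟩) 1⟩
  have hkey := h f (fun x hx => by
      have := hg1 x hx; simp only [hf]; linarith)
    hfb (by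
      obtain ⟨x, hx⟩ := hA
      exact ⟨x, hx, by simp [hf]⟩)
  -- sup of f is at least M + 1
  have hMle : M + 1 ≤ sSup (f '' A) := by
    have : M ≤ sSup (f '' A) - 1 := by
      apply csSup_le hne
      rintro _ ⟨x, hx, rfl⟩
      have := le_csSup hfb ⟨x, hx, rfl⟩
      simp only [hf] at this
      linarith
    linarith
  -- sup of f/g is at most 1 + 1/m
  have hub : sSup ((fun x => f x / g x) '' A) ≤ 1 + 1/m := by
    apply csSup_le (hA.image _)
    rintro _ ⟨x, hx, rfl⟩
    have hgx : 0 < g x := lt_of_lt_of_le one_pos (hg1 x hx)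
    have h1 : f x / g x = 1 + 1 / g x := by
      field_simp [hf]
      rfl
    show f x / g x ≤ 1 + 1/m
    rw [h1]
    have : 1 / g x ≤ 1 / m := one_div_le_one_div_of_le hm0 (hmle x hx)
    linarith
  rw [hkey] at hub
  have hMm : M ≤ m := by
    have h2 : sSup (f '' A) ≤ (1 + 1/m) * m := (div_le_iff₀ hm0).mp hub
    have h3 : (1 + 1/m) * m = m + 1 := by field_simp
    linarith
  intro x hx y hy
  have := hmle x hx; have := hleM x hx
  have := hmle y hy; have := hleM y hy
  linarith
end

section
/- Let f : ℝ⁺ → ℝ⁺ be a function such that f(x·f(y) + y) = f(x·y) + f(y) for all x, y > 0. Then f(x) = x for all x > 0. -/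
theorem stmt_4 (f : ℝ → ℝ) (hpos : ∀ x > 0, f x > 0)
    (hfe : ∀ x > 0, ∀ y > 0, f (x * f y + y) = f (x * y) + f y) :
    ∀ x > 0, f x = x := by
  -- Step 1: f y ≥ y for all y > 0
  have h1 : ∀ y > 0, y ≤ f y := by
    intro y hy
    by_contra h
    push_neg at h
    have hfy := hpos y hy
    have hd : 0 < y - f y := by linarith
    set x := y / (y - f y) with hxdef
    have hx : 0 < x := div_pos hy hd
    have hxy : x * f y + y = x * y := by
      have hmul : x * (y - f y) = y := div_mul_cancel₀ y (ne_of_gt hd)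
      nlinarith [hmul]
    have hkey := hfe x hx y hy
    rw [hxy] at hkey
    linarith
  intro y hy
  by_contra hne
  have hylt : y < f y := lt_of_le_of_ne (h1 y hy) (Ne.symm hne)
  have hfy := hpos y hy
  set c := f y / y with hc
  have hcy : f y = c * y := by
    rw [hc, div_mul_cancel₀ _ (ne_of_gt hy)]
  have hc1 : 1 < c := (one_lt_div hy).2 hylt
  have hcpos : 0 < c := by linarith
  -- Main induction: f t ≥ c^n * t - n * f y
  have main : ∀ n : ℕ, ∀ t > 0, c ^ n * t - n * f y ≤ f t := by
    intro n
    induction n with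
    | zero =>
      intro t ht
      simpa using h1 t ht
    | succ n ih =>
      intro t ht
      set x := t / y with hxdef
      have hx : 0 < x := div_pos ht hy
      have hxy : x * y = t := div_mul_cancel₀ t (ne_of_gt hy)
      have hkey := hfe x hx y hy
      have hpt : 0 < x * f y + y := by positivity
      have hih := ih (x * f y + y) hpt
      rw [hkey, hxy] at hih
      -- x * f y = c * t
      have hxfy : x * f y = c * t := by
        rw [hcy, hxdef]
        field_simp
      have hcn : (0:ℝ) < c ^ n := pow_pos hcpos n
      have hcny : 0 < c ^ n * y := by positivity
      have hexp : c ^ (n + 1) = c ^ n * c := pow_succ c n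
      push_cast
      nlinarith [hih, hxfy, hcny]
  -- At t = y: c^n ≤ (n+1) * c
  have hbound : ∀ n : ℕ, c ^ n ≤ (n + 1 : ℝ) * c := by
    intro n
    have := main n y hy
    rw [hcy] at this
    have h2 : c ^ n * y ≤ (n + 1 : ℝ) * c * y := by nlinarith
    exact le_of_mul_le_mul_right (by linarith [h2]) hy
  -- Contradiction: c^n grows superlinearly
  obtain ⟨m, hm⟩ := exists_nat_gt (3 * c / (c - 1) ^ 2)
  set n := m + 1 with hn
  have hn1 : (1:ℝ) ≤ n := by exact_mod_cast Nat.one_le_iff_ne_zero.2 (by omega)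
  have hnpos : (0:ℝ) < n := by linarith
  have hd2 : (0:ℝ) < (c - 1) ^ 2 := pow_pos (by linarith) 2
  have hngt : (n : ℝ) > 3 * c / (c - 1) ^ 2 := by
    have : (m:ℝ) ≤ (n:ℝ) := by rw [hn]; push_cast; linarith
    linarith
  have hn3c : (n : ℝ) * (c - 1) ^ 2 > 3 * c := by
    rw [gt_iff_lt, div_lt_iff₀ hd2] at hngt
    linarith
  -- Bernoulli: c^n ≥ 1 + n(c-1)
  have hb : 1 + (n : ℝ) * (c - 1) ≤ c ^ n := by
    have hbb := one_add_mul_le_pow (by linarith : (-2:ℝ) ≤ c - 1) n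
    have he : (1 + (c - 1)) = c := by ring
    rw [he] at hbb
    linarith
  have hcnpos : (0:ℝ) < (n:ℝ) * (c - 1) := by nlinarith
  -- c^(2n) = (c^n)^2 ≥ (n(c-1))^2
  have hsq : ((n:ℝ) * (c - 1)) ^ 2 ≤ c ^ (2 * n) := by
    have h2n : c ^ (2 * n) = (c ^ n) ^ 2 := by rw [pow_mul, sq]; ring
    rw [h2n]
    nlinarith [hb, hcnpos]
  have hub := hbound (2 * n)
  have hub2 : c ^ (2 * n) ≤ 3 * (n:ℝ) * c := by
    have : ((2 * n : ℕ) + 1 : ℝ) ≤ 3 * (n:ℝ) := by push_cast; linarith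
    calc c ^ (2 * n) ≤ ((2 * n : ℕ) + 1 : ℝ) * c := hub
      _ ≤ 3 * (n:ℝ) * c := by nlinarith
  nlinarith [hsq, hub2, hn3c, hnpos]
end

section
/- Let f : ℝ⁺ → ℝ⁺ be a function such that f(x·y + f(x)) = (f(x) + f(y))/2 for all x, y > 0. Then f is constant, i.e. there exists c > 0 with f(x) = c for all x > 0. -/
theorem stmt_5 (f : ℝ → ℝ) (hpos : ∀ x > 0, f x > 0)
    (hfe : ∀ x > 0, ∀ y > 0, f (x * y + f x) = (f x + f y) / 2) :
    ∃ c > 0, ∀ x > 0, f x = c := by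
  set c := f 1 with hc
  have hcpos : c > 0 := hpos 1 one_pos
  have H1 : ∀ y > 0, f (y + c) = (c + f y) / 2 := by
    intro y hy
    have := hfe 1 one_pos y hy
    rw [one_mul] at this
    linarith [this]
  refine ⟨c, hcpos, ?_⟩
  intro a ha
  by_contra hne
  set d := f a - c with hd
  have hdne : d ≠ 0 := sub_ne_zero.mpr hne
  have hfa : f a = d + c := by rw [hd]; ring
  -- star: f (a*y + d) = f y + d
  have star : ∀ y > 0, a * y + d > 0 → f (a * y + d) = f y + d := by
    intro y hy hp
    have e1 := hfe a ha y hy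
    have harg : a * y + f a = (a * y + d) + c := by rw [hfa]; ring
    rw [harg] at e1
    have e2 := H1 (a * y + d) hp
    rw [e2, hfa] at e1
    linarith
  -- star2: f (y + c/a) = (c + f y - d) / 2
  have star2 : ∀ y > 0, a * y + d > 0 → f (y + c / a) = (c + f y - d) / 2 := by
    intro y hy hp
    have hz : y + c / a > 0 := by positivity
    have hzp : a * (y + c / a) + d > 0 := by
      have : a * (y + c / a) = a * y + c := by field_simp
      rw [this]; linarith
    have s1 := star (y + c / a) hz hzp
    have harg : a * (y + c / a) + d = (a * y + d) + c := by field_simp; ring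
    rw [harg] at s1
    have s2 := H1 (a * y + d) hp
    have s3 := star y hy hp
    rw [s2, s3] at s1
    linarith
  -- choose y0
  set y0 := (|d| + 1) / a with hy0def
  have hy0 : y0 > 0 := by positivity
  have hp0 : a * y0 + d > 0 := by
    have : a * y0 = |d| + 1 := by rw [hy0def]; field_simp
    rw [this]
    have : -d ≤ |d| := neg_le_abs d
    linarith
  have hy1 : y0 + c > 0 := by positivity
  have hp1 : a * (y0 + c) + d > 0 := by
    have : a * (y0 + c) + d = (a * y0 + d) + a * c := by ring
    rw [this]
    have : a * c > 0 := by positivity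
    linarith
  have hy2 : y0 + c / a > 0 := by positivity
  have A := star2 y0 hy0 hp0
  have B := H1 y0 hy0
  have C := star2 (y0 + c) hy1 hp1
  have D := H1 (y0 + c / a) hy2
  rw [show y0 + c / a + c = y0 + c + c / a from by ring] at D
  rw [B] at C
  rw [A] at D
  have : d = 0 := by linarith
  exact hdne this
end

section
/- Let f : ℝ⁺ → ℝ be a function such that f(x + y) + f(x + z) − f(x)·f(y + z) ≥ 1 for all x, y, z > 0. Then f(x) = 1 for all x > 0. -/
theorem stmt_7 (f : ℝ → ℝ)
    (hfe : ∀ x > 0, ∀ y > 0, ∀ z > 0,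
      f (x + y) + f (x + z) - f x * f (y + z) ≥ 1) :
    ∀ x > 0, f x = 1 := by
  -- key inequality (1): for all x>0, f(2x)*(2 - f x) ≥ 1, phrased via halves:
  -- for all x>0, f x * (2 - f (x/2)) ≥ 1
  have key : ∀ x > 0, f x * (2 - f (x / 2)) ≥ 1 := by
    intro x hx
    have h2 : x / 2 > 0 := by linarith
    have h := hfe (x/2) h2 (x/2) h2 (x/2) h2
    have e : x/2 + x/2 = x := by ring
    rw [e] at h
    nlinarith [h]
  -- (A): 2 f(x+y) ≥ 1 + f x * f (2y)
  have hA : ∀ x > 0, ∀ y > 0, 2 * f (x + y) ≥ 1 + f x * f (y + y) := by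
    intro x hx y hy
    have h := hfe x hx y hy y hy
    linarith
  -- Step 1: f x < 2 everywhere
  have hlt2 : ∀ x > 0, f x < 2 := by
    intro a ha
    by_contra hc
    push_neg at hc
    -- f a ≥ 2.  key at 2a : f(2a)*(2 - f a) ≥ 1 hence f a ≠ 2 and f(2a) < 0
    have h2a : (2:ℝ) * a > 0 := by linarith
    have k1 := key (2*a) h2a
    have e1 : 2*a/2 = a := by ring
    rw [e1] at k1
    -- so f a > 2 (if f a = 2 then 0 ≥ 1) and f(2a) < 0
    have hfa : f a > 2 := by
      rcases lt_or_eq_of_le hc with h | h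
      · exact h
      · exfalso; rw [← h] at k1; norm_num at k1
    have hneg : f (2*a) < 0 := by nlinarith
    -- f(3a/2) > 2 from (A) with x = a, y = a/2
    have ha2 : a / 2 > 0 := by linarith
    have hA1 := hA a ha (a/2) ha2
    have e2 : a/2 + a/2 = a := by ring
    rw [e2] at hA1
    have hf32 : f (a + a/2) > 2 := by nlinarith
    -- f(2a) > 2 from (A) with x = 3a/2, y = a/2: contradiction
    have h32 : a + a/2 > 0 := by linarith
    have hA2 := hA (a + a/2) h32 (a/2) ha2
    rw [e2] at hA2
    have e3 : a + a/2 + a/2 = 2*a := by ring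
    rw [e3] at hA2
    nlinarith
  -- Step 2: f x > 0 everywhere
  have hpos : ∀ x > 0, f x > 0 := by
    intro x hx
    have k := key x hx
    have h2 := hlt2 (x/2) (by linarith)
    nlinarith
  -- Step 3: ∀ n, (n+1) * f x ≥ n
  have hlow : ∀ n : ℕ, ∀ x > 0, ((n:ℝ) + 1) * f x ≥ n := by
    intro n
    induction n with
    | zero => intro x hx; have := hpos x hx; push_cast; linarith
    | succ n ih =>
      intro x hx
      have k := key x hx
      have h2 := ih (x/2) (by linarith)
      have hp := hpos x hx
      push_cast
      nlinarith [mul_le_mul_of_nonneg_right h2 (le_of_lt hp)]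
  have hge1 : ∀ x > 0, f x ≥ 1 := by
    intro x hx
    by_contra hc
    push_neg at hc
    obtain ⟨n, hn⟩ := exists_nat_gt (1 / (1 - f x))
    have h1 : 1 - f x > 0 := by linarith
    have h2 := hlow n x hx
    have h3 : (n:ℝ) * (1 - f x) > 1 := by
      have : (1:ℝ) / (1 - f x) > 0 := by positivity
      calc (n:ℝ) * (1 - f x) > (1 / (1 - f x)) * (1 - f x) := by
            apply mul_lt_mul_of_pos_right hn h1
        _ = 1 := by field_simp
    nlinarith
  -- Step 4: ∀ n, (n+1) * f x ≤ n + 2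
  have hhigh : ∀ n : ℕ, ∀ x > 0, ((n:ℝ) + 1) * f x ≤ n + 2 := by
    intro n
    induction n with
    | zero => intro x hx; have := hlt2 x hx; push_cast; linarith
    | succ n ih =>
      intro x hx
      -- use key at 2x: f(2x)*(2 - f x) ≥ 1, with bounds on f(2x)
      have h2x : (2:ℝ) * x > 0 := by linarith
      have k := key (2*x) h2x
      have e : 2*x/2 = x := by ring
      rw [e] at k
      have hub := ih (2*x) h2x
      have hlb := hge1 (2*x) h2x
      have hx2 := hlt2 x hx
      push_cast
      push_cast at hub
      nlinarith [mul_le_mul_of_nonneg_right hub (by linarith : (0:ℝ) ≤ 2 - f x)]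
  have hle1 : ∀ x > 0, f x ≤ 1 := by
    intro x hx
    by_contra hc
    push_neg at hc
    obtain ⟨n, hn⟩ := exists_nat_gt (1 / (f x - 1))
    have h1 : f x - 1 > 0 := by linarith
    have h2 := hhigh n x hx
    have h3 : (n:ℝ) * (f x - 1) > 1 := by
      calc (n:ℝ) * (f x - 1) > (1 / (f x - 1)) * (f x - 1) := by
            apply mul_lt_mul_of_pos_right hn h1
        _ = 1 := by field_simp
    nlinarith
  intro x hx
  have := hge1 x hx
  have := hle1 x hx
  linarith
end

section
/- Let f : ℝ → (0,∞) be a continuous function such that ln(f(f(x))) = f(x) for all x ∈ ℝ and f(−x) = 1/f(x) for all x ∈ ℝ. Then f(x) = e^x for all x ∈ ℝ. -/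
theorem stmt_8 (f : ℝ → ℝ) (hc : Continuous f) (hpos : ∀ x : ℝ, 0 < f x)
    (h1 : ∀ x : ℝ, Real.log (f (f x)) = f x)
    (h2 : ∀ x : ℝ, f (-x) = 1 / f x) :
    ∀ x : ℝ, f x = Real.exp x := by
  have key : ∀ y ∈ Set.range f, f y = Real.exp y := by
    rintro y ⟨x, rfl⟩
    have h := Real.exp_log (hpos (f x))
    rw [h1 x] at h
    exact h.symm
  have f0 : f 0 = 1 := by
    have h := h2 0
    have hp := hpos 0
    rw [neg_zero] at h
    field_simp at h
    nlinarith
  have h1mem : (1 : ℝ) ∈ Set.range f := ⟨0, f0⟩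
  have hconn : IsPreconnected (Set.range f) := (isConnected_range hc).isPreconnected
  set a : ℕ → ℝ := fun n => f^[n+1] 0 with ha
  have haS : ∀ n, a n ∈ Set.range f := fun n =>
    ⟨f^[n] 0, (Function.iterate_succ_apply' f n 0).symm⟩
  have hstep : ∀ n, a (n+1) = Real.exp (a n) := by
    intro n
    have : a (n+1) = f (a n) := by
      simp only [ha, Function.iterate_succ_apply' f (n+1) 0]
    rw [this, key _ (haS n)]
  have hge : ∀ n : ℕ, (n : ℝ) + 1 ≤ a n := by
    intro n
    induction n with
    | zero => simp [ha, f0]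
    | succ k ih =>
      rw [hstep k]
      have := Real.add_one_le_exp (a k)
      push_cast
      linarith
  have hrange1 : ∀ y : ℝ, 1 ≤ y → y ∈ Set.range f := by
    intro y hy
    obtain ⟨n, hn⟩ := exists_nat_ge y
    have : y ∈ Set.Icc 1 (a n) := ⟨hy, by linarith [hge n]⟩
    exact hconn.Icc_subset h1mem (haS n) this
  have hrange : ∀ y : ℝ, 0 < y → y ∈ Set.range f := by
    intro y hy
    rcases le_or_gt 1 y with h | h
    · exact hrange1 y h
    · have h1y : 1 ≤ 1 / y := by
        rw [le_div_iff₀ hy]; linarith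
      obtain ⟨x, hx⟩ := hrange1 (1 / y) h1y
      refine ⟨-x, ?_⟩
      rw [h2, hx]
      field_simp
  intro x
  rcases lt_trichotomy x 0 with hx | hx | hx
  · have hx' : 0 < -x := by linarith
    have hfx : f (-x) = Real.exp (-x) := key _ (hrange _ hx')
    have h := h2 (-x)
    rw [neg_neg, hfx] at h
    rw [h, Real.exp_neg, one_div, inv_inv]
  · rw [hx, f0, Real.exp_zero]
  · exact key _ (hrange _ hx)
end

section
/- Let f : ℝ⁺ → ℝ⁺ be a function such that f(x)·f(x + 2f(y)) = x·f(x + y) + f(x)·f(y) for all x, y > 0. Then f(x) = x for all x > 0. -/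
/-
  Solution outline:
  Let g x = f x - x.
  * l_step1 : t > 2 f y → f t > f y.
  * l_half  : f y > y / 2.
  * l_lb    : u < v → f u < 2 * f v   (f never drops below half an earlier value).
  * l_lc    : f u < 4 u + E           (global linear upper bound, E = 2 f (2 f 1 + 1)).
  * l_keyd  : g (a+y) = g y + g (a + 2 f y) + (g a / f a) * f (a + y)   (key identity).
  * iterating the key identity along the orbit z₀ = 1, z_{j+1} = 2 f (z_j):
      l_X    : for every c > 0, eventually g a < c * a   (no positive linear amplitude),
      l_Xneg : for every c > 0, eventually g b > -c * b  (no negative linear amplitude).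
  * Finally, if f w ≠ w, the key identity at a = w gives a linear-size term
    ((f w - w)/f w) * f (w + y) which contradicts the sub-linear bounds on g.
-/

private noncomputable def zor (f : ℝ → ℝ) : ℕ → ℝ
  | 0 => 1
  | j + 1 => 2 * f (zor f j)

private lemma zor_pos (f : ℝ → ℝ) (hpos : ∀ x > 0, f x > 0) : ∀ j, 0 < zor f j := by
  intro j
  induction j with
  | zero => norm_num [zor]
  | succ j ih =>
      have := hpos (zor f j) ih
      simp only [zor]
      linarith

private lemma l_step1 (f : ℝ → ℝ) (hpos : ∀ x > 0, f x > 0)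
    (hfe : ∀ x > 0, ∀ y > 0, f x * f (x + 2 * f y) = x * f (x + y) + f x * f y) :
    ∀ y > 0, ∀ t : ℝ, 2 * f y < t → f y < f t := by
  intro y hy t ht
  have hfy := hpos y hy
  have hx : 0 < t - 2 * f y := by linarith
  have h := hfe (t - 2 * f y) hx y hy
  have e : t - 2 * f y + 2 * f y = t := by ring
  rw [e] at h
  have h1 := hpos _ hx
  have h2 := hpos (t - 2 * f y + y) (by linarith)
  nlinarith [mul_pos hx h2]

private lemma l_half (f : ℝ → ℝ) (hpos : ∀ x > 0, f x > 0)
    (hfe : ∀ x > 0, ∀ y > 0, f x * f (x + 2 * f y) = x * f (x + y) + f x * f y) :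
    ∀ y > 0, y / 2 < f y := by
  intro y hy
  by_contra hcon
  push_neg at hcon
  have h2 : 2 * f y ≤ y := by linarith
  rcases eq_or_lt_of_le h2 with heq | hlt
  · have hall : ∀ x > 0, x < f x := by
      intro x hx
      have h := hfe x hx y hy
      rw [heq] at h
      have h1 := hpos x hx
      have h3 := hpos (x + y) (by linarith)
      have h4 := hpos y hy
      nlinarith [mul_pos h1 h4]
    have := hall y hy
    linarith
  · have := l_step1 f hpos hfe y hy y hlt
    linarith

private lemma l_lb (f : ℝ → ℝ) (hpos : ∀ x > 0, f x > 0)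
    (hfe : ∀ x > 0, ∀ y > 0, f x * f (x + 2 * f y) = x * f (x + y) + f x * f y) :
    ∀ u > 0, ∀ v : ℝ, u < v → f u < 2 * f v := by
  intro u hu v huv
  have hh : 0 < v - u := by linarith
  have h := hfe u hu (v - u) hh
  have e : u + (v - u) = v := by ring
  rw [e] at h
  have hfvu := hpos (v - u) hh
  have hP := l_half f hpos hfe (u + 2 * f (v - u)) (by linarith)
  have hfu := hpos u hu
  have hfv := hpos v (by linarith)
  nlinarith [mul_lt_mul_of_pos_left hP hfu]

private lemma l_lc (f : ℝ → ℝ) (hpos : ∀ x > 0, f x > 0)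
    (hfe : ∀ x > 0, ∀ y > 0, f x * f (x + 2 * f y) = x * f (x + y) + f x * f y) :
    ∀ u > 0, f u < 4 * u + 2 * f (2 * f 1 + 1) := by
  intro u hu
  have hf1 := hpos 1 one_pos
  have hhalf1 := l_half f hpos hfe 1 one_pos
  have hE : 0 < 2 * f (2 * f 1 + 1) := by
    have := hpos (2 * f 1 + 1) (by linarith)
    linarith
  rcases lt_or_ge u (2 * f 1) with hcase | hcase
  · have := l_lb f hpos hfe u hu (2 * f 1 + 1) (by linarith)
    linarith
  · have h4 : f u < 4 * u := by
      by_contra hcon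
      push_neg at hcon
      have hm := hfe u hu 1 one_pos
      have hu1 : (0:ℝ) < u + 1 := by linarith
      have hlb := l_lb f hpos hfe (u + 1) hu1 (u + 2 * f 1) (by linarith)
      have hfu := hpos u hu
      have hfu1 := hpos (u + 1) hu1
      have hfU := hpos (u + 2 * f 1) (by linarith)
      have hstep : f (u + 1) < 4 * f 1 := by
        nlinarith [mul_lt_mul_of_pos_left hlb hfu]
      have := l_lb f hpos hfe u hu (u + 1) (by linarith)
      linarith
    linarith

private lemma l_keyd (f : ℝ → ℝ) (hpos : ∀ x > 0, f x > 0)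
    (hfe : ∀ x > 0, ∀ y > 0, f x * f (x + 2 * f y) = x * f (x + y) + f x * f y) :
    ∀ a > 0, ∀ y > 0,
      f (a + y) - (a + y) =
        (f y - y) + (f (a + 2 * f y) - (a + 2 * f y)) + (f a - a) / f a * f (a + y) := by
  intro a ha y hy
  have h := hfe a ha y hy
  have hfa : f a ≠ 0 := ne_of_gt (hpos a ha)
  field_simp
  rw [mul_comm 2 (f y)] at h
  linear_combination (-1 : ℝ) * h

private lemma l_iter (f : ℝ → ℝ) (hpos : ∀ x > 0, f x > 0)
    (hfe : ∀ x > 0, ∀ y > 0, f x * f (x + 2 * f y) = x * f (x + y) + f x * f y) :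
    ∀ a : ℝ, 0 < a → ∀ J : ℕ,
      f (a + 1) - (a + 1) =
        (∑ j ∈ Finset.range J,
          ((f (zor f j) - zor f j) + (f a - a) / f a * f (a + zor f j)))
        + (f (a + zor f J) - (a + zor f J)) := by
  intro a ha J
  induction J with
  | zero => simp [zor]
  | succ J ih =>
      rw [Finset.sum_range_succ]
      have hz := zor_pos f hpos J
      have hkey := l_keyd f hpos hfe a ha (zor f J) hz
      have hzz : zor f (J + 1) = 2 * f (zor f J) := rfl
      rw [hzz, ih]
      linarith [hkey]

private lemma l_X (f : ℝ → ℝ) (hpos : ∀ x > 0, f x > 0)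
    (hfe : ∀ x > 0, ∀ y > 0, f x * f (x + 2 * f y) = x * f (x + y) + f x * f y) :
    ∀ c : ℝ, 0 < c → ∃ A : ℝ, 0 < A ∧ ∀ a : ℝ, A ≤ a → f a - a < c * a := by
  intro c hc
  obtain ⟨J, hJ⟩ := exists_nat_ge (9 / c)
  have hJc : 9 ≤ (J : ℝ) * c := by
    rw [div_le_iff₀ hc] at hJ
    linarith
  have hf1 := hpos 1 one_pos
  have hE : 0 < 2 * f (2 * f 1 + 1) := by
    have := hpos (2 * f 1 + 1) (by linarith)
    linarith
  set E := 2 * f (2 * f 1 + 1) with hEdef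
  have hzpos : ∀ j, 0 < zor f j := zor_pos f hpos
  set S := ∑ j ∈ Finset.range (J + 1), zor f j with hSdef
  have hS : 0 ≤ S := Finset.sum_nonneg fun j _ => (hzpos j).le
  refine ⟨S + E + 4, by linarith, ?_⟩
  intro a ha
  by_contra hcon
  push_neg at hcon
  have hapos : 0 < a := by linarith
  have hfa := hpos a hapos
  have hga : 0 < f a - a := lt_of_lt_of_le (mul_pos hc hapos) hcon
  have hsummand : ∀ j ∈ Finset.range J,
      (c * a / 2 - zor f j / 2) ≤
        (f (zor f j) - zor f j) + (f a - a) / f a * f (a + zor f j) := by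
    intro j _
    have hz := hzpos j
    have h1 : zor f j / 2 < f (zor f j) := l_half f hpos hfe _ hz
    have h2 : f a < 2 * f (a + zor f j) := l_lb f hpos hfe a hapos _ (by linarith)
    have h3 : (f a - a) / 2 ≤ (f a - a) / f a * f (a + zor f j) := by
      rw [div_mul_eq_mul_div, le_div_iff₀ hfa]
      nlinarith
    have h4 : c * a / 2 ≤ (f a - a) / 2 := by linarith
    linarith
  have hsum := Finset.sum_le_sum hsummand
  have hsum_eval : ∑ j ∈ Finset.range J, (c * a / 2 - zor f j / 2)
      = (J : ℝ) * (c * a / 2) - (∑ j ∈ Finset.range J, zor f j) / 2 := by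
    rw [Finset.sum_sub_distrib, Finset.sum_const, Finset.card_range, nsmul_eq_mul,
      Finset.sum_div]
  rw [hsum_eval] at hsum
  have hiter := l_iter f hpos hfe a hapos J
  have hzJ := hzpos J
  have hlast : -((a + zor f J) / 2) < f (a + zor f J) - (a + zor f J) := by
    have := l_half f hpos hfe (a + zor f J) (by linarith)
    linarith
  have hupper : f (a + 1) < 4 * (a + 1) + E := l_lc f hpos hfe (a + 1) (by linarith)
  have hSsplit : S = (∑ j ∈ Finset.range J, zor f j) + zor f J := by
    rw [hSdef, Finset.sum_range_succ]
  have hS1 : 0 ≤ ∑ j ∈ Finset.range J, zor f j :=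
    Finset.sum_nonneg fun j _ => (hzpos j).le
  have h9a : 9 * a ≤ (J : ℝ) * c * a := by
    nlinarith
  have hJca : (J : ℝ) * (c * a / 2) = ((J : ℝ) * c * a) / 2 := by ring
  nlinarith [hsum, hiter, hlast, hupper]

private lemma l_Xneg (f : ℝ → ℝ) (hpos : ∀ x > 0, f x > 0)
    (hfe : ∀ x > 0, ∀ y > 0, f x * f (x + 2 * f y) = x * f (x + y) + f x * f y) :
    ∀ c : ℝ, 0 < c → ∃ B : ℝ, 0 < B ∧ ∀ b : ℝ, B ≤ b → -(c * b) < f b - b := by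
  intro c hc
  obtain ⟨J, hJ⟩ := exists_nat_ge (4 / c)
  have hJc : 4 ≤ (J : ℝ) * c := by
    rw [div_le_iff₀ hc] at hJ
    linarith
  obtain ⟨A0, hA0pos, hA0⟩ := l_X f hpos hfe (1/2) (by norm_num)
  have hfA0 := hpos (A0 + 1) (by linarith)
  set D := 2 * f (A0 + 1) with hDdef
  have hD : 0 < D := by linarith
  have hglob : ∀ s : ℝ, 0 < s → f s - s < s / 2 + D := by
    intro s hs
    rcases le_or_gt A0 s with h | h
    · have := hA0 s h
      have : f s - s < 1/2 * s := this
      linarith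
    · have := l_lb f hpos hfe s hs (A0 + 1) (by linarith)
      linarith
  have hzpos : ∀ j, 0 < zor f j := zor_pos f hpos
  set T := ∑ j ∈ Finset.range J, f (zor f j) with hTdef
  have hT : 0 ≤ T := Finset.sum_nonneg fun j _ => (hpos _ (hzpos j)).le
  have hzJ := hzpos J
  refine ⟨T + zor f J + D + 2, by linarith, ?_⟩
  intro b hb
  by_contra hcon
  push_neg at hcon
  have hbpos : 0 < b := by linarith
  have hfb := hpos b hbpos
  have hfb_lt : f b - b < 0 := by nlinarith [mul_pos hc hbpos]
  have hsummand : ∀ j ∈ Finset.range J,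
      (f (zor f j) - zor f j) + (f b - b) / f b * f (b + zor f j) ≤
        f (zor f j) - c * b / 2 := by
    intro j _
    have hz := hzpos j
    have h1 : f b < 2 * f (b + zor f j) := l_lb f hpos hfe b hbpos _ (by linarith)
    have hk : (f b - b) / f b ≤ 0 :=
      div_nonpos_of_nonpos_of_nonneg hfb_lt.le hfb.le
    have h2 : (f b - b) / f b * f (b + zor f j) ≤ (f b - b) / f b * (f b / 2) :=
      mul_le_mul_of_nonpos_left (by linarith) hk
    have h3 : (f b - b) / f b * (f b / 2) = (f b - b) / 2 := by
      field_simp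
    have h4 : (f b - b) / 2 ≤ -(c * b) / 2 := by linarith
    have h5 : 0 < zor f j := hz
    linarith
  have hsum := Finset.sum_le_sum hsummand
  have hsum_eval : ∑ j ∈ Finset.range J, (f (zor f j) - c * b / 2)
      = T - (J : ℝ) * (c * b / 2) := by
    rw [Finset.sum_sub_distrib, Finset.sum_const, Finset.card_range, nsmul_eq_mul, hTdef]
  rw [hsum_eval] at hsum
  have hiter := l_iter f hpos hfe b hbpos J
  have hlast : f (b + zor f J) - (b + zor f J) < (b + zor f J) / 2 + D :=
    hglob _ (by linarith)
  have hLA : -((b + 1) / 2) < f (b + 1) - (b + 1) := by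
    have := l_half f hpos hfe (b + 1) (by linarith)
    linarith
  have h4b : 4 * b ≤ (J : ℝ) * c * b := by nlinarith
  nlinarith [hsum, hiter, hlast, hLA]

theorem stmt_9 (f : ℝ → ℝ) (hpos : ∀ x > 0, f x > 0)
    (hfe : ∀ x > 0, ∀ y > 0,
      f x * f (x + 2 * f y) = x * f (x + y) + f x * f y) :
    ∀ x > 0, f x = x := by
  intro w hw
  by_contra hne
  have hfw := hpos w hw
  have hκne : f w - w ≠ 0 := sub_ne_zero.mpr hne
  have hf1 := hpos 1 one_pos
  obtain ⟨E, hEpos, hEbound⟩ :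
      ∃ E : ℝ, 0 < E ∧ ∀ u > 0, f u < 4 * u + E := by
    refine ⟨2 * f (2 * f 1 + 1), ?_, l_lc f hpos hfe⟩
    have := hpos (2 * f 1 + 1) (by linarith)
    linarith
  have hmain : ∀ c : ℝ, 0 < c →
      ((f w - w) / f w = 100 * c ∨ (f w - w) / f w = -(100 * c)) → False := by
    intro c hc hcoefs
    obtain ⟨A, hApos, hA⟩ := l_X f hpos hfe c hc
    obtain ⟨B, hBpos, hB⟩ := l_Xneg f hpos hfe c hc
    obtain ⟨y, hy, hyA, hyB, hyW⟩ :
        ∃ y : ℝ, 0 < y ∧ A ≤ y ∧ B ≤ y ∧ (w + E) / 20 < y := by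
      refine ⟨max (max A B) ((w + E) / 20) + 1, ?_, ?_, ?_, ?_⟩
      · have : (0:ℝ) ≤ max (max A B) ((w + E) / 20) :=
          le_trans hApos.le (le_trans (le_max_left A B) (le_max_left _ _))
        linarith
      · have := le_trans (le_max_left A B) (le_max_left (max A B) ((w + E) / 20))
        linarith
      · have := le_trans (le_max_right A B) (le_max_left (max A B) ((w + E) / 20))
        linarith
      · have := le_max_right (max A B) ((w + E) / 20)
        linarith
    have hfy := hpos y hy
    have hhalfy := l_half f hpos hfe y hy
    have hp2 : y ≤ w + y := by linarith
    have hp3 : y ≤ w + 2 * f y := by linarith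
    have b1u := hA y hyA
    have b1l := hB y hyB
    have b2u := hA (w + y) (le_trans hyA hp2)
    have b2l := hB (w + y) (le_trans hyB hp2)
    have b3u := hA (w + 2 * f y) (le_trans hyA hp3)
    have b3l := hB (w + 2 * f y) (le_trans hyB hp3)
    have hfyub : f y < 4 * y + E := hEbound y hy
    have hfwyl : (w + y) / 2 < f (w + y) := l_half f hpos hfe (w + y) (by linarith)
    have hkey := l_keyd f hpos hfe w hw y hy
    have h2fy : 2 * f y < 8 * y + 2 * E := by linarith [hfyub]
    have h5 : c * (2 * f y) < c * (8 * y + 2 * E) := mul_lt_mul_of_pos_left h2fy hc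
    have hy2 : y / 2 < f (w + y) := by linarith
    have h100c : (0:ℝ) < 100 * c := by linarith
    have hlb : 100 * c * (y / 2) < 100 * c * f (w + y) :=
      mul_lt_mul_of_pos_left hy2 h100c
    have hfin : 50 * y < 2 * w + 10 * y + 2 * E := by
      have hub : 100 * c * f (w + y) < c * (w + y) + c * y + c * (w + 2 * f y) := by
        rcases hcoefs with hcoef | hcoef
        · rw [hcoef] at hkey
          linarith [b2u, b1l, b3l]
        · rw [hcoef] at hkey
          linarith [b1u, b3u, b2l]
      have hkey2 : c * (50 * y) < c * (2 * w + 10 * y + 2 * E) := by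
        nlinarith [hub, hlb, h5]
      exact lt_of_mul_lt_mul_left hkey2 hc.le
    linarith [hyW]
  rcases hκne.lt_or_gt with hneg | hposs
  · refine hmain (|f w - w| / (100 * f w)) (by positivity) (Or.inr ?_)
    rw [abs_of_neg hneg]
    field_simp
  · refine hmain (|f w - w| / (100 * f w)) (by positivity) (Or.inl ?_)
    rw [abs_of_pos hposs]
    field_simp
end

section
/- Let f : ℝ⁺ → ℝ⁺ be a function such that f(x)·f(x + 2f(y)) = x·f(x + y) + f(x)·f(y) for all x, y > 0. Then f(x) > x/2 for all x > 0. -/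
theorem stmt_10 (f : ℝ → ℝ) (hpos : ∀ x > 0, f x > 0)
    (hfe : ∀ x > 0, ∀ y > 0,
      f x * f (x + 2 * f y) = x * f (x + y) + f x * f y) :
    ∀ x > 0, f x > x / 2 := by
  intro x hx
  rcases lt_trichotomy (f x) (x / 2) with h | h | h
  · exfalso
    have ht : x - 2 * f x > 0 := by linarith
    have heq := hfe (x - 2 * f x) ht x hx
    have hfx : x - 2 * f x + 2 * f x = x := by ring
    rw [hfx] at heq
    have h1 := hpos (x - 2 * f x + x) (by linarith)
    nlinarith
  · exfalso
    have heq := hfe x hx x hx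
    have hx2 : x + 2 * f x = x + x := by linarith
    rw [hx2] at heq
    have h2 := hpos (x + x) (by linarith)
    nlinarith
  · exact h
end

section
/- Let f : ℝ⁺ → ℝ⁺ be a function such that f(x² + y²) + 2·f(x)·f(y) = (x + y)² for all x, y > 0. Then f(x) = x for all x > 0. -/
theorem stmt_11 (f : ℝ → ℝ) (hpos : ∀ x > 0, f x > 0)
    (hfe : ∀ x > 0, ∀ y > 0,
      f (x ^ 2 + y ^ 2) + 2 * f x * f y = (x + y) ^ 2) :
    ∀ x > 0, f x = x := by
  have hle : ∀ s > 0, f s ≤ s := by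
    intro s hs
    by_contra h
    push_neg at h
    set c := f s - s with hc
    have hcpos : 0 < c := by simp [hc]; linarith
    have hsq : 0 < Real.sqrt s := Real.sqrt_pos.mpr hs
    set x := min (Real.sqrt s / 2) (c / (4 * Real.sqrt s)) with hx
    have hxpos : 0 < x := lt_min (by linarith) (by positivity)
    have hx1 : x ≤ Real.sqrt s / 2 := min_le_left _ _
    have hx2 : x ≤ c / (4 * Real.sqrt s) := min_le_right _ _
    have hss : (Real.sqrt s) ^ 2 = s := Real.sq_sqrt hs.le
    have hxsq : x ^ 2 < s := by nlinarith
    set y := Real.sqrt (s - x ^ 2) with hy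
    have hypos : 0 < y := Real.sqrt_pos.mpr (by linarith)
    have hy2 : y ^ 2 = s - x ^ 2 := Real.sq_sqrt (by linarith)
    have hsum : x ^ 2 + y ^ 2 = s := by linarith
    have hyle : y ≤ Real.sqrt s := by
      rw [hy]
      exact Real.sqrt_le_sqrt (by nlinarith)
    have hxy : x * y < c / 2 := by
      have h1 : x * y ≤ (c / (4 * Real.sqrt s)) * Real.sqrt s :=
        mul_le_mul hx2 hyle hypos.le (by positivity)
      have heq : (c / (4 * Real.sqrt s)) * Real.sqrt s = c / 4 := by
        field_simp
      nlinarith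
    have heq := hfe x hxpos y hypos
    rw [hsum] at heq
    have hfx := hpos x hxpos
    have hfy := hpos y hypos
    nlinarith [mul_pos hfx hfy]
  intro x hx
  have h1 : f x ≤ x := hle x hx
  have h2 := hfe x hx x hx
  have h3 : f (x ^ 2 + x ^ 2) ≤ x ^ 2 + x ^ 2 := hle _ (by positivity)
  have hfx := hpos x hx
  refine le_antisymm h1 ?_
  nlinarith [mul_pos hfx hx, sq_nonneg (f x - x)]
end

section
/- Let f : ℝ⁺ → ℝ⁺ be a function such that f(x·y + f(x)) = f(x)·f(y) + x for all x, y > 0. Then f(x) = x for all x > 0. -/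
theorem stmt_12 (f : ℝ → ℝ) (hpos : ∀ x > 0, f x > 0)
    (hfe : ∀ x > 0, ∀ y > 0, f (x * y + f x) = f x * f y + x) :
    ∀ x > 0, f x = x := by
  -- Step 1: f x ≥ x
  have h1 : ∀ x > 0, x ≤ f x := by
    intro x hx
    by_contra h
    push_neg at h
    have hfx := hpos x hx
    have hy : (x - f x) / x > 0 := div_pos (by linarith) hx
    have e := hfe x hx _ hy
    have harg : x * ((x - f x) / x) + f x = x := by field_simp; ring
    rw [harg] at e
    have hfy := hpos _ hy
    nlinarith
  set c := f 1 with hc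
  have hc0 : 0 < c := hpos 1 one_pos
  have hA : ∀ y > 0, f (y + c) = c * f y + 1 := by
    intro y hy
    have e := hfe 1 one_pos y hy
    rw [one_mul] at e
    linarith
  -- Step 2: c ≥ 1
  have hc1 : 1 ≤ c := by
    by_contra h
    push_neg at h
    have h1c : (0:ℝ) < 1 - c := by linarith
    have hinv : (1 - c) * (1 / (1 - c)) = 1 := by field_simp
    have key : ∀ n : ℕ, f (1 + n * c) ≤ f 1 + 1 / (1 - c) := by
      intro n
      induction n with
      | zero => simp; linarith [one_div_pos.mpr h1c]
      | succ n ih =>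
        have hp : (0:ℝ) < 1 + n * c := by positivity
        have e : f (1 + (n + 1 : ℕ) * c) = c * f (1 + n * c) + 1 := by
          have harg : 1 + ((n:ℝ) + 1) * c = (1 + n * c) + c := by ring
          push_cast
          rw [harg]
          exact hA _ hp
        have hfp := hpos _ hp
        nlinarith
    obtain ⟨n, hn⟩ := exists_nat_gt ((f 1 + 1 / (1 - c)) / c)
    have hn' : f 1 + 1 / (1 - c) < n * c := by
      rw [div_lt_iff₀ hc0] at hn; linarith
    have h2 := key n
    have h3 := h1 (1 + n * c) (by positivity)
    linarith
  -- Step 3: c ≤ 1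
  have hc2 : c ≤ 1 := by
    by_contra h
    push_neg at h
    set x := c + 2 with hxd
    have hx : (0:ℝ) < x := by positivity
    have hfx := h1 x hx
    have hy0 : (0:ℝ) < x + f x - c := by linarith
    have e1 := hfe x hx 1 one_pos
    rw [mul_one] at e1
    have e2 := hA (x + f x - c) hy0
    have harg : (x + f x - c) + c = x + f x := by ring
    rw [harg] at e2
    have e3 := h1 (x + f x - c) hy0
    have e4 := mul_le_mul_of_nonneg_left e3 hc0.le
    nlinarith
  have hcc : c = 1 := le_antisymm hc2 hc1
  -- shift and fixed points
  have hshift : ∀ y > 0, f (y + 1) = f y + 1 := by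
    intro y hy
    have e := hA y hy
    rw [hcc] at e
    linarith
  have hfix : ∀ x > 0, f (x + f x) = x + f x := by
    intro x hx
    have e := hfe x hx 1 one_pos
    rw [mul_one] at e
    rw [← hc, hcc] at e
    linarith
  -- final step
  intro a ha
  by_contra hne
  have hfa := h1 a ha
  have hd : a < f a := lt_of_le_of_ne hfa (Ne.symm hne)
  have hy : (0:ℝ) < (a + 1) / a := by positivity
  have e := hfe a ha _ hy
  have harg : a * ((a + 1) / a) + f a = (a + f a) + 1 := by field_simp; ring
  rw [harg] at e
  have hafa : (0:ℝ) < a + f a := by linarith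
  rw [hshift (a + f a) hafa, hfix a ha] at e
  have hb := h1 _ hy
  have hfapos := hpos a ha
  have hmul := mul_le_mul_of_nonneg_left hb hfapos.le
  have hkey : f a * ((a + 1) / a) * a = f a * (a + 1) := by field_simp
  nlinarith
end

section
/- Let f : ℝ⁺ → ℝ⁺ be a function such that f(x·y + f(x)) = f(x)·f(y) + x for all x, y > 0. Then f(x) ≥ x for all x > 0. -/
theorem stmt_13 (f : ℝ → ℝ) (hpos : ∀ x > 0, f x > 0)
    (hfe : ∀ x > 0, ∀ y > 0, f (x * y + f x) = f x * f y + x) :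
    ∀ x > 0, f x ≥ x := by
  intro x hx
  by_contra h
  push_neg at h
  set y := (x - f x) / x with hy
  have hy0 : y > 0 := div_pos (by linarith) hx
  have hxy : x * y + f x = x := by
    rw [hy]
    field_simp
    ring
  have := hfe x hx y hy0
  rw [hxy] at this
  have h1 := hpos x hx
  have h2 := hpos y hy0
  nlinarith
end

section
/- Let f : ℝ⁺ → ℝ⁺ be a function such that f(x + f(x·y)) + y = f(x)·f(y) + 1 for all x, y > 0. Then f(x) = x + 1 for all x > 0. -/
private noncomputable def s14seq (f : ℝ → ℝ) (s : ℝ) : ℕ → ℝ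
  | 0 => s
  | n + 1 => 1 + f (s14seq f s n)

private noncomputable def s14itr (f : ℝ → ℝ) (y : ℝ) : ℕ → ℝ
  | 0 => 1
  | k + 1 => s14itr f y k + f (s14itr f y k * y)

private noncomputable def s14anc (f : ℝ → ℝ) : ℕ → ℝ
  | 0 => 1
  | n + 1 => s14anc f n + f (s14anc f n)

private lemma s14B (f : ℝ → ℝ) (hpos : ∀ x > 0, f x > 0)
    (hfe : ∀ x > 0, ∀ y > 0, f (x + f (x * y)) + y = f x * f y + 1) :
    ∀ y > 0, f (1 + f y) = f 1 * f y + 1 - y := by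
  intro y hy
  have h := hfe 1 one_pos y hy
  rw [one_mul] at h
  linarith

private lemma s14A (f : ℝ → ℝ) (hpos : ∀ x > 0, f x > 0)
    (hfe : ∀ x > 0, ∀ y > 0, f (x + f (x * y)) + y = f x * f y + 1) :
    ∀ x > 0, f (x + f x) = f x * f 1 := by
  intro x hx
  have h := hfe x hx 1 one_pos
  rw [mul_one] at h
  linarith

private lemma s14inj (f : ℝ → ℝ) (hpos : ∀ x > 0, f x > 0)
    (hfe : ∀ x > 0, ∀ y > 0, f (x + f (x * y)) + y = f x * f y + 1) :
    ∀ a > 0, ∀ b > 0, f a = f b → a = b := by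
  intro a ha b hb h
  have h1 := s14B f hpos hfe a ha
  have h2 := s14B f hpos hfe b hb
  rw [h] at h1
  linarith

private lemma s14prod (f : ℝ → ℝ) (hpos : ∀ x > 0, f x > 0)
    (hfe : ∀ x > 0, ∀ y > 0, f (x + f (x * y)) + y = f x * f y + 1) :
    ∀ x > 0, ∀ y > 0, y - 1 < f x * f y := by
  intro x hx y hy
  have h := hfe x hx y hy
  have h1 : 0 < f (x * y) := hpos _ (mul_pos hx hy)
  have h2 : 0 < f (x + f (x * y)) := hpos _ (by linarith)
  linarith

private lemma s14seq_pos (f : ℝ → ℝ) (hpos : ∀ x > 0, f x > 0) (s : ℝ) (hs : 0 < s) :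
    ∀ n, 0 < s14seq f s n := by
  intro n
  induction n with
  | zero => exact hs
  | succ n ih =>
    have := hpos _ ih
    show (0:ℝ) < 1 + f (s14seq f s n)
    linarith

private lemma s14rec (f : ℝ → ℝ) (hpos : ∀ x > 0, f x > 0)
    (hfe : ∀ x > 0, ∀ y > 0, f (x + f (x * y)) + y = f x * f y + 1)
    (s : ℝ) (hs : 0 < s) :
    ∀ n, f (s14seq f s (n+2)) = f 1 * f (s14seq f s (n+1)) - f (s14seq f s n) := by
  intro n
  have hp := s14seq_pos f hpos s hs (n+1)
  have hB := s14B f hpos hfe (s14seq f s (n+1)) hp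
  rw [show s14seq f s (n+2) = 1 + f (s14seq f s (n+1)) from rfl, hB,
    show s14seq f s (n+1) = 1 + f (s14seq f s n) from rfl]
  ring

private lemma s14c2 (f : ℝ → ℝ) (hpos : ∀ x > 0, f x > 0)
    (hfe : ∀ x > 0, ∀ y > 0, f (x + f (x * y)) + y = f x * f y + 1) :
    (2:ℝ) ≤ f 1 := by
  by_contra hc
  push_neg at hc
  have hc0 : (0:ℝ) < f 1 := hpos 1 one_pos
  have hApos : ∀ n, 0 < f (s14seq f 1 n) := fun n => hpos _ (s14seq_pos f hpos 1 one_pos n)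
  have hrec : ∀ n, f (s14seq f 1 (n+2)) = f 1 * f (s14seq f 1 (n+1)) - f (s14seq f 1 n) :=
    s14rec f hpos hfe 1 one_pos
  set A : ℕ → ℝ := fun n => f (s14seq f 1 n) with hA
  obtain ⟨δ, hδpos, hδq⟩ : ∃ δ : ℝ, 0 < δ ∧ ∀ u : ℝ, δ ≤ u^2 - f 1 * u + 1 :=
    ⟨1 - (f 1)^2/4, by nlinarith, fun u => by nlinarith [sq_nonneg (u - f 1/2)]⟩
  set r : ℕ → ℝ := fun n => A (n+1) / A n with hr
  have hrpos : ∀ n, 0 < r n := fun n => div_pos (hApos _) (hApos _)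
  have hrrec : ∀ n, r (n+1) * r n = f 1 * r n - 1 := by
    intro n
    have h1 : A n ≠ 0 := ne_of_gt (hApos n)
    have h2 : A (n+1) ≠ 0 := ne_of_gt (hApos (n+1))
    show (A (n+2) / A (n+1)) * (A (n+1) / A n) = f 1 * (A (n+1) / A n) - 1
    field_simp
    linarith [hrec n]
  have hstep : ∀ n, r n ≤ r 0 → r (n+1) ≤ r n - δ / r 0 := by
    intro n hle
    have h0 := hrpos n
    have hq : δ ≤ (r n)^2 - f 1 * r n + 1 := hδq (r n)
    have h1 := hrrec n
    have h2 : r (n+1) = (f 1 * r n - 1) / r n := by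
      rw [eq_div_iff (ne_of_gt h0)]
      linarith
    rw [h2, div_le_iff₀ h0]
    have h3 : δ / r 0 * r n ≤ δ := by
      rw [div_mul_eq_mul_div, div_le_iff₀ (hrpos 0)]
      nlinarith
    nlinarith [hq]
  have hind : ∀ n, r n ≤ r 0 - n * (δ / r 0) := by
    intro n
    induction n with
    | zero => simp
    | succ n ih =>
      have hle : r n ≤ r 0 := by
        have h4 : (0:ℝ) ≤ (n:ℝ) * (δ / r 0) :=
          mul_nonneg (Nat.cast_nonneg n) (div_pos hδpos (hrpos 0)).le
        linarith
      have := hstep n hle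
      push_cast
      linarith
  obtain ⟨n, hn⟩ := exists_nat_gt (r 0 / (δ / r 0))
  have h1 := hind n
  have h2 := hrpos n
  have h3 : 0 < δ / r 0 := div_pos hδpos (hrpos 0)
  rw [div_lt_iff₀ h3] at hn
  linarith
private lemma s14big (f : ℝ → ℝ) (hpos : ∀ x > 0, f x > 0)
    (hfe : ∀ x > 0, ∀ y > 0, f (x + f (x * y)) + y = f x * f y + 1) :
    ∀ y, 1 < y → 1 < f y := by
  intro y hy
  by_contra hle
  push_neg at hle
  have hy0 : (0:ℝ) < y := by linarith
  have hupos : ∀ k, 0 < s14itr f y k := by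
    intro k
    induction k with
    | zero => exact one_pos
    | succ k ih =>
      have := hpos _ (mul_pos ih hy0)
      show (0:ℝ) < s14itr f y k + f (s14itr f y k * y)
      linarith
  have hv : ∀ k, f (s14itr f y (k+1)) = f y * f (s14itr f y k) + 1 - y := by
    intro k
    have h := hfe (s14itr f y k) (hupos k) y hy0
    rw [mul_comm (f (s14itr f y k)) (f y)] at h
    have hid : s14itr f y (k+1) = s14itr f y k + f (s14itr f y k * y) := rfl
    rw [hid]
    linarith
  have hdec : ∀ k, f (s14itr f y k) ≤ f 1 - k * (y - 1) := by
    intro k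
    induction k with
    | zero =>
      show f (s14itr f y 0) ≤ f 1 - (0:ℕ) * (y - 1)
      rw [show s14itr f y 0 = 1 from rfl]
      push_cast
      linarith
    | succ k ih =>
      have h1 := hv k
      have h2 : f y * f (s14itr f y k) ≤ f (s14itr f y k) := by
        nlinarith [hpos _ (hupos k)]
      push_cast
      push_cast at ih
      linarith
  obtain ⟨k, hk⟩ := exists_nat_gt (f 1 / (y - 1))
  rw [div_lt_iff₀ (by linarith)] at hk
  have := hdec k
  have := hpos _ (hupos k)
  linarith

private lemma s14fge1 (f : ℝ → ℝ) (hpos : ∀ x > 0, f x > 0)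
    (hfe : ∀ x > 0, ∀ y > 0, f (x + f (x * y)) + y = f x * f y + 1) :
    ∀ x, 1 ≤ x → 1 ≤ f x := by
  intro x hx
  rcases eq_or_lt_of_le hx with h | h
  · rw [← h]; linarith [s14c2 f hpos hfe]
  · exact le_of_lt (s14big f hpos hfe x h)

private lemma s14anc_pos (f : ℝ → ℝ) (hpos : ∀ x > 0, f x > 0) :
    ∀ n, 0 < s14anc f n := by
  intro n
  induction n with
  | zero => exact one_pos
  | succ n ih =>
    have := hpos _ ih
    show (0:ℝ) < s14anc f n + f (s14anc f n)
    linarith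

private lemma s14anc_val (f : ℝ → ℝ) (hpos : ∀ x > 0, f x > 0)
    (hfe : ∀ x > 0, ∀ y > 0, f (x + f (x * y)) + y = f x * f y + 1) :
    ∀ n, f (s14anc f n) = (f 1)^(n+1) := by
  intro n
  induction n with
  | zero =>
    show f (s14anc f 0) = (f 1)^(0+1)
    rw [show s14anc f 0 = 1 from rfl, pow_one]
  | succ n ih =>
    have h1 : s14anc f (n+1) = s14anc f n + f (s14anc f n) := rfl
    rw [h1, s14A f hpos hfe _ (s14anc_pos f hpos n), ih, ← pow_succ]

private lemma s14anc_lin (f : ℝ → ℝ) (hpos : ∀ x > 0, f x > 0)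
    (hfe : ∀ x > 0, ∀ y > 0, f (x + f (x * y)) + y = f x * f y + 1) :
    ∀ n, (f 1)^(n+1) = (f 1 - 1) * s14anc f n + 1 := by
  intro n
  induction n with
  | zero =>
    rw [show s14anc f 0 = 1 from rfl, pow_one]
    ring
  | succ n ih =>
    have h1 : s14anc f (n+1) = s14anc f n + f (s14anc f n) := rfl
    rw [h1, s14anc_val f hpos hfe n, pow_succ]
    linear_combination ih

private lemma s14anc_ge (f : ℝ → ℝ) (hpos : ∀ x > 0, f x > 0)
    (hfe : ∀ x > 0, ∀ y > 0, f (x + f (x * y)) + y = f x * f y + 1) :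
    ∀ n : ℕ, (n:ℝ) + 1 ≤ s14anc f n := by
  intro n
  induction n with
  | zero =>
    rw [show s14anc f 0 = 1 from rfl]
    norm_num
  | succ n ih =>
    have h1 : s14anc f (n+1) = s14anc f n + f (s14anc f n) := rfl
    have h2 := s14anc_val f hpos hfe n
    have hc2 := s14c2 f hpos hfe
    have h3 : (1:ℝ) ≤ (f 1)^(n+1) := by
      calc (1:ℝ) = 1^(n+1) := (one_pow _).symm
        _ ≤ (f 1)^(n+1) := pow_le_pow_left₀ zero_le_one (by linarith) _
    rw [h1]
    push_cast
    push_cast at ih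
    linarith [h2 ▸ h3]

private lemma s14A1 (f : ℝ → ℝ) (hpos : ∀ x > 0, f x > 0)
    (hfe : ∀ x > 0, ∀ y > 0, f (x + f (x * y)) + y = f x * f y + 1) :
    f (s14seq f 1 1) = f 1 * f 1 := by
  have h1 : s14seq f 1 1 = 1 + f 1 := by
    show (1:ℝ) + f (s14seq f 1 0) = 1 + f 1
    rfl
  rw [h1, s14B f hpos hfe 1 one_pos]
  ring

private lemma s14dmono (f : ℝ → ℝ) (hpos : ∀ x > 0, f x > 0)
    (hfe : ∀ x > 0, ∀ y > 0, f (x + f (x * y)) + y = f x * f y + 1) :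
    ∀ n, f 1 * f 1 - f 1 ≤ f (s14seq f 1 (n+1)) - f (s14seq f 1 n) := by
  intro n
  induction n with
  | zero =>
    rw [s14A1 f hpos hfe, show s14seq f 1 0 = 1 from rfl]
  | succ n ih =>
    have hrec := s14rec f hpos hfe 1 one_pos n
    have hpos1 := hpos _ (s14seq_pos f hpos 1 one_pos (n+1))
    have hc2 := s14c2 f hpos hfe
    nlinarith [mul_nonneg (show (0:ℝ) ≤ f 1 - 2 by linarith) (le_of_lt hpos1)]

private lemma s14Agrow (f : ℝ → ℝ) (hpos : ∀ x > 0, f x > 0)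
    (hfe : ∀ x > 0, ∀ y > 0, f (x + f (x * y)) + y = f x * f y + 1) :
    ∀ n, f 1 + n * (f 1 * f 1 - f 1) ≤ f (s14seq f 1 n) := by
  intro n
  induction n with
  | zero =>
    rw [show s14seq f 1 0 = 1 from rfl]
    push_cast
    linarith
  | succ n ih =>
    have := s14dmono f hpos hfe n
    push_cast
    push_cast at ih
    linarith

private lemma s14Slin (f : ℝ → ℝ) (hpos : ∀ x > 0, f x > 0)
    (hfe : ∀ x > 0, ∀ y > 0, f (x + f (x * y)) + y = f x * f y + 1) :
    ∀ n, f (s14seq f 1 n) ≤ f 1 * s14seq f 1 n := by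
  intro n
  cases n with
  | zero =>
    rw [show s14seq f 1 0 = 1 from rfl, mul_one]
  | succ n =>
    have h1 : s14seq f 1 (n+1) = 1 + f (s14seq f 1 n) := rfl
    have hSp := s14seq_pos f hpos 1 one_pos n
    have hB := s14B f hpos hfe _ hSp
    have hc2 := s14c2 f hpos hfe
    rw [h1, hB]
    nlinarith [hSp]
set_option maxHeartbeats 1000000 in
private lemma s14lim (f : ℝ → ℝ) (hpos : ∀ x > 0, f x > 0)
    (hfe : ∀ x > 0, ∀ y > 0, f (x + f (x * y)) + y = f x * f y + 1) :
    ∀ ε : ℝ, 0 < ε → ∃ w : ℝ, 0 < w ∧ w ≤ 1 ∧ f w < 1 + ε := by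
  intro ε hε
  by_contra hcon
  push_neg at hcon
  have hc2 := s14c2 f hpos hfe
  have hc0 : (0:ℝ) < f 1 := hpos 1 one_pos
  have hstep : ∀ x : ℝ, 1 ≤ x → (1+ε) * f x ≤ f (x + f 1) := by
    intro x hx
    have hx0 : (0:ℝ) < x := by linarith
    have hdx : (0:ℝ) < 1/x := by positivity
    have h := hfe x hx0 (1/x) hdx
    rw [show x * (1/x) = 1 by field_simp] at h
    have h1x : 1/x ≤ 1 := by rw [div_le_one hx0]; exact hx
    have hf1x : 1 + ε ≤ f (1/x) := hcon _ hdx h1x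
    have hfx := hpos x hx0
    nlinarith [mul_le_mul_of_nonneg_left hf1x (le_of_lt hfx)]
  have hchain : ∀ j : ℕ, ∀ x : ℝ, 1 ≤ x → (1+ε)^j * f x ≤ f (x + j * f 1) := by
    intro j
    induction j with
    | zero => intro x hx; simp
    | succ j ih =>
      intro x hx
      have hjc : (0:ℝ) ≤ (j:ℝ) * f 1 := mul_nonneg (Nat.cast_nonneg j) (le_of_lt hc0)
      have h2 : (1:ℝ) ≤ x + j * f 1 := by linarith
      have h3 := hstep _ h2
      have h4 := ih x hx
      have h5 : x + ((j+1 : ℕ):ℝ) * f 1 = (x + (j:ℝ) * f 1) + f 1 := by push_cast; ring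
      rw [h5]
      calc (1+ε)^(j+1) * f x = (1+ε) * ((1+ε)^j * f x) := by ring
        _ ≤ (1+ε) * f (x + (j:ℝ) * f 1) := by
            apply mul_le_mul_of_nonneg_left h4 (by linarith)
        _ ≤ f (x + (j:ℝ) * f 1 + f 1) := h3
  have hcor : ∀ j : ℕ, ∀ m : ℝ, 1 + j * f 1 ≤ m → (1+ε)^j ≤ f m := by
    intro j m hm
    have h1 : (1:ℝ) ≤ m - j * f 1 := by linarith
    have h2 := hchain j (m - j * f 1) h1
    rw [show m - (j:ℝ) * f 1 + (j:ℝ) * f 1 = m by ring] at h2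
    have h3 := s14fge1 f hpos hfe (m - j * f 1) h1
    have h4 : (0:ℝ) < (1+ε)^j := pow_pos (by linarith) j
    nlinarith
  obtain ⟨k, hk⟩ := exists_nat_gt (max ((2*(f 1)^3 + f 1)/ε^2) (1 + f 1))
  have hkA : (2*(f 1)^3 + f 1)/ε^2 < k := lt_of_le_of_lt (le_max_left _ _) hk
  have hkB : 1 + f 1 < k := lt_of_le_of_lt (le_max_right _ _) hk
  have hk0 : (0:ℝ) < (k:ℝ) := by linarith
  have hkε2 : 2*(f 1)^3 + f 1 < k * ε^2 := by
    rw [div_lt_iff₀ (by positivity)] at hkA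
    linarith
  classical
  have hex : ∃ n, 1 + ((k*2:ℕ):ℝ) * f 1 ≤ s14seq f 1 n := by
    refine ⟨k*2 + 1, ?_⟩
    have hg := s14Agrow f hpos hfe (k*2)
    have hS : s14seq f 1 (k*2+1) = 1 + f (s14seq f 1 (k*2)) := rfl
    rw [hS]
    have h2 : f 1 ≤ f 1 * f 1 - f 1 := by nlinarith
    have h1 : ((k*2:ℕ):ℝ) * f 1 ≤ ((k*2:ℕ):ℝ) * (f 1 * f 1 - f 1) :=
      mul_le_mul_of_nonneg_left h2 (Nat.cast_nonneg (k*2))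
    linarith
  set N := Nat.find hex with hNdef
  have hNs : 1 + ((k*2:ℕ):ℝ) * f 1 ≤ s14seq f 1 N := Nat.find_spec hex
  have hlow : (1+ε)^(k*2) ≤ f (s14seq f 1 N) := hcor (k*2) _ hNs
  have hN0 : N ≠ 0 := by
    intro h0
    rw [h0, show s14seq f 1 0 = 1 from rfl] at hNs
    have h1 : (0:ℝ) < ((k*2:ℕ):ℝ) := by push_cast; linarith
    nlinarith
  obtain ⟨M, hM⟩ : ∃ M, N = M + 1 := ⟨N - 1, by omega⟩
  have hmin : ¬ (1 + ((k*2:ℕ):ℝ) * f 1 ≤ s14seq f 1 M) := by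
    apply Nat.find_min hex
    omega
  push_neg at hmin
  have hSM := s14Slin f hpos hfe M
  have hSN : s14seq f 1 (M+1) = 1 + f (s14seq f 1 M) := rfl
  have hupN := s14Slin f hpos hfe (M+1)
  rw [hM] at hlow
  rw [hSN] at hupN hlow
  -- hupN : f (1 + f (S M)) ≤ f 1 * (1 + f (S M))
  -- hlow : (1+ε)^(k*2) ≤ f (1 + f (S M))
  have hup2 : f (1 + f (s14seq f 1 M)) < f 1 + (f 1)^2 + (f 1)^2 * (((k*2:ℕ):ℝ) * f 1) := by
    have h1 : f 1 * f (s14seq f 1 M) ≤ f 1 * (f 1 * s14seq f 1 M) :=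
      mul_le_mul_of_nonneg_left hSM (le_of_lt hc0)
    have h2 : f 1 * (f 1 * s14seq f 1 M) < f 1 * (f 1 * (1 + ((k*2:ℕ):ℝ) * f 1)) := by
      have := mul_lt_mul_of_pos_left hmin (mul_pos hc0 hc0)
      nlinarith
    nlinarith [hupN]
  have hBern : 1 + (k:ℝ) * ε ≤ (1+ε)^k := one_add_mul_le_pow (by linarith : (-2:ℝ) ≤ ε) k
  have hsq : (1+ε)^(k*2) = ((1+ε)^k)^2 := pow_mul (1+ε) k 2
  have hlow2 : (1+(k:ℝ)*ε)^2 ≤ (1+ε)^(k*2) := by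
    rw [hsq]
    exact pow_le_pow_left₀ (by positivity) hBern 2
  have e1 : (k:ℝ) * (2*(f 1)^3 + f 1) < (k:ℝ) * ((k:ℝ) * ε^2) :=
    mul_lt_mul_of_pos_left hkε2 hk0
  have e2 : (1 + f 1) * f 1 < (k:ℝ) * f 1 := mul_lt_mul_of_pos_right hkB hc0
  have e3 : ((k:ℝ)*ε)^2 ≤ (1+(k:ℝ)*ε)^2 := by nlinarith [mul_nonneg (le_of_lt hk0) (le_of_lt hε)]
  push_cast at hup2
  nlinarith [hlow, hup2, hlow2, e1, e2, e3]
private lemma s14ge1 (f : ℝ → ℝ) (hpos : ∀ x > 0, f x > 0)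
    (hfe : ∀ x > 0, ∀ y > 0, f (x + f (x * y)) + y = f x * f y + 1) :
    ∀ y > 0, y - 1 ≤ f y := by
  intro y hy
  rcases le_or_gt y 1 with h | h
  · have := hpos y hy
    linarith
  · by_contra hcon
    push_neg at hcon
    have hfy := hpos y hy
    have hε : 0 < (y-1)/f y - 1 := by
      rw [sub_pos, lt_div_iff₀ hfy]
      linarith
    obtain ⟨w, hw0, hw1, hwf⟩ := s14lim f hpos hfe _ hε
    rw [show 1 + ((y-1)/f y - 1) = (y-1)/f y by ring] at hwf
    have h2 := s14prod f hpos hfe w hw0 y hy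
    have h3 : f w * f y < y - 1 := by
      have hfw := hpos w hw0
      calc f w * f y < ((y-1)/f y) * f y := mul_lt_mul_of_pos_right hwf hfy
        _ = y - 1 := by field_simp
    linarith

private lemma s14ne1 (f : ℝ → ℝ) (hpos : ∀ x > 0, f x > 0)
    (hfe : ∀ x > 0, ∀ y > 0, f (x + f (x * y)) + y = f x * f y + 1) :
    ∀ b > 0, f b ≠ 1 := by
  intro b hb h1
  have hA := s14A f hpos hfe b hb
  rw [h1, one_mul] at hA
  have := s14inj f hpos hfe (b + 1) (by linarith) 1 one_pos hA
  linarith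

private lemma s14small (f : ℝ → ℝ) (hpos : ∀ x > 0, f x > 0)
    (hfe : ∀ x > 0, ∀ y > 0, f (x + f (x * y)) + y = f x * f y + 1) :
    ∀ x, 0 < x → x < 1 → 1 ≤ f x := by
  intro x hx0 hx1
  by_contra hcon
  push_neg at hcon
  have hfx := hpos x hx0
  have hf3 : (0:ℝ) < f 3 := hpos 3 (by norm_num)
  have hglob : ∀ p : ℝ, 0 < p → 2 / f 3 < f p := by
    intro p hp
    have := s14prod f hpos hfe p hp 3 (by norm_num)
    rw [div_lt_iff₀ hf3]
    linarith
  have hm3 : (0:ℝ) < 2 / f 3 := by positivity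
  have hupos : ∀ k, 0 < s14itr f x k := by
    intro k
    induction k with
    | zero => exact one_pos
    | succ k ih =>
      have := hpos _ (mul_pos ih hx0)
      show (0:ℝ) < s14itr f x k + f (s14itr f x k * x)
      linarith
  have hv : ∀ k, f (s14itr f x (k+1)) = f x * f (s14itr f x k) + 1 - x := by
    intro k
    have h := hfe (s14itr f x k) (hupos k) x hx0
    rw [mul_comm (f (s14itr f x k)) (f x)] at h
    have hid : s14itr f x (k+1) = s14itr f x k + f (s14itr f x k * x) := rfl
    rw [hid]
    linarith
  have hMub : ∀ k, f (s14itr f x k) ≤ max (f 1) ((1-x)/(1 - f x)) := by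
    intro k
    induction k with
    | zero =>
      rw [show s14itr f x 0 = 1 from rfl]
      exact le_max_left _ _
    | succ k ih =>
      have h1 := hv k
      have h2 : (1-x)/(1-f x) ≤ max (f 1) ((1-x)/(1 - f x)) := le_max_right _ _
      have h3 : (0:ℝ) < 1 - f x := by linarith
      have h4 : 1 - x ≤ max (f 1) ((1-x)/(1 - f x)) * (1 - f x) := by
        rw [div_le_iff₀ h3] at h2
        linarith
      have h5 := hpos _ (hupos k)
      have h6 : (0:ℝ) < max (f 1) ((1-x)/(1 - f x)) := lt_of_lt_of_le (hpos 1 one_pos) (le_max_left _ _)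
      nlinarith [mul_le_mul_of_nonneg_left ih (le_of_lt hfx)]
  have hulb : ∀ k : ℕ, 1 + (k:ℝ) * (2 / f 3) ≤ s14itr f x k := by
    intro k
    induction k with
    | zero =>
      rw [show s14itr f x 0 = 1 from rfl]
      push_cast
      linarith
    | succ k ih =>
      have h1 := hglob _ (mul_pos (hupos k) hx0)
      have hid : s14itr f x (k+1) = s14itr f x k + f (s14itr f x k * x) := rfl
      rw [hid]
      push_cast
      push_cast at ih
      linarith
  have huub : ∀ k, s14itr f x k ≤ max (f 1) ((1-x)/(1 - f x)) + 1 := by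
    intro k
    have h1 := s14ge1 f hpos hfe (s14itr f x k) (hupos k)
    linarith [hMub k]
  obtain ⟨k, hk⟩ := exists_nat_gt ((max (f 1) ((1-x)/(1 - f x))) / (2 / f 3))
  rw [div_lt_iff₀ hm3] at hk
  have := hulb k
  have := huub k
  linarith

private lemma s14gt1 (f : ℝ → ℝ) (hpos : ∀ x > 0, f x > 0)
    (hfe : ∀ x > 0, ∀ y > 0, f (x + f (x * y)) + y = f x * f y + 1) :
    ∀ x, 0 < x → 1 < f x := by
  intro x hx
  rcases lt_trichotomy x 1 with h | h | h
  · exact lt_of_le_of_ne (s14small f hpos hfe x hx h) (Ne.symm (s14ne1 f hpos hfe x hx))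
  · rw [h]
    linarith [s14c2 f hpos hfe]
  · exact s14big f hpos hfe x h
private lemma s14Y1 (f : ℝ → ℝ) (hpos : ∀ x > 0, f x > 0)
    (hfe : ∀ x > 0, ∀ y > 0, f (x + f (x * y)) + y = f x * f y + 1) :
    ∀ x > 0, f (1 + f x * f 1) = f 1 * (f x * f 1) + 1 - (x + f x) := by
  intro x hx
  have hz : 0 < x + f x := by linarith [hpos x hx]
  have h := s14B f hpos hfe (x + f x) hz
  rw [s14A f hpos hfe x hx] at h
  exact h

private lemma s14ub (f : ℝ → ℝ) (hpos : ∀ x > 0, f x > 0)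
    (hfe : ∀ x > 0, ∀ y > 0, f (x + f (x * y)) + y = f x * f y + 1) :
    ∀ x > 0, f x ≤ (f 1)^2 * x + 1 := by
  intro x hx
  have hF := hpos x hx
  have hτ : (0:ℝ) < (1 + f x)/x := by positivity
  have h := hfe x hx _ hτ
  rw [show x * ((1 + f x)/x) = 1 + f x by field_simp] at h
  rw [s14B f hpos hfe x hx] at h
  rw [show x + (f 1 * f x + 1 - x) = 1 + f x * f 1 by ring] at h
  rw [s14Y1 f hpos hfe x hx] at h
  -- h : f 1 * (f x * f 1) + 1 - (x + f x) + (1 + f x)/x = f x * f ((1 + f x)/x) + 1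
  have hge := s14ge1 f hpos hfe _ hτ
  have h5 : f x * ((1 + f x)/x - 1) ≤ f x * f ((1 + f x)/x) :=
    mul_le_mul_of_nonneg_left hge (le_of_lt hF)
  have h6 : (f x - 1) * ((1 + f x)/x) ≤ (f 1)^2 * f x - x := by nlinarith [h, h5]
  have h7 : (f x - 1) * (1 + f x) ≤ ((f 1)^2 * f x - x) * x := by
    have h8 : ((f x - 1) * ((1 + f x)/x)) * x ≤ ((f 1)^2 * f x - x) * x :=
      mul_le_mul_of_nonneg_right h6 (le_of_lt hx)
    calc (f x - 1) * (1 + f x) = ((f x - 1) * ((1 + f x)/x)) * x := by field_simp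
      _ ≤ ((f 1)^2 * f x - x) * x := h8
  have hgt := s14gt1 f hpos hfe x hx
  nlinarith [h7, hgt, hx, sq_nonneg x]

private lemma s14geid (f : ℝ → ℝ) (hpos : ∀ x > 0, f x > 0)
    (hfe : ∀ x > 0, ∀ y > 0, f (x + f (x * y)) + y = f x * f y + 1) :
    ∀ y > 0, y ≤ f y := by
  intro y hy
  rcases le_or_gt y 1 with h | h
  · linarith [s14gt1 f hpos hfe y hy]
  · by_contra hcon
    push_neg at hcon
    have hfy := hpos y hy
    have hε : 0 < y / f y - 1 := by
      rw [sub_pos, lt_div_iff₀ hfy]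
      linarith
    obtain ⟨w, hw0, hw1, hwf⟩ := s14lim f hpos hfe _ hε
    rw [show 1 + (y/f y - 1) = y/f y by ring] at hwf
    have hh := hfe w hw0 y hy
    have hargpos : 0 < w + f (w*y) := by
      have := hpos _ (mul_pos hw0 hy)
      linarith
    have h2 := s14gt1 f hpos hfe _ hargpos
    have h3 : f w * f y < y := by
      have hfw := hpos w hw0
      calc f w * f y < (y / f y) * f y := mul_lt_mul_of_pos_right hwf hfy
        _ = y := by field_simp
    linarith

private lemma s14ub2 (f : ℝ → ℝ) (hpos : ∀ x > 0, f x > 0)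
    (hfe : ∀ x > 0, ∀ y > 0, f (x + f (x * y)) + y = f x * f y + 1) :
    ∀ y > 0, f y ≤ y + (f 1)^2 := by
  intro y hy
  have hc0 : (0:ℝ) < f 1 := hpos 1 one_pos
  have hcsq : (0:ℝ) < (f 1)^2 := by positivity
  have hcore : ∀ ε : ℝ, 0 < ε → f y ≤ y + (f 1)^2 + (f 1)^2 * ε := by
    intro ε hε
    have hden : (0:ℝ) < 1 + (f 1)^2 * y := by positivity
    set δ : ℝ := min 1 (ε / (1 + (f 1)^2 * y)) with hδdef
    have hδ0 : 0 < δ := lt_min one_pos (div_pos hε hden)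
    have h := hfe δ hδ0 y hy
    have hδy : 0 < δ * y := mul_pos hδ0 hy
    have hub1 := s14ub f hpos hfe (δ * y) hδy
    have hppos : 0 < δ + f (δ * y) := by
      have := hpos _ hδy
      linarith
    have hub2' := s14ub f hpos hfe _ hppos
    have hδε : δ * (1 + (f 1)^2 * y) ≤ ε := by
      have h1 : δ ≤ ε / (1 + (f 1)^2 * y) := min_le_right _ _
      rw [le_div_iff₀ hden] at h1
      exact h1
    have hgtδ := s14gt1 f hpos hfe δ hδ0
    have hfypos := hpos y hy
    have hp1 : δ + f (δ * y) ≤ 1 + ε := by nlinarith [hub1, hδε]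
    have hp2 : f (δ + f (δ * y)) ≤ (f 1)^2 * (1 + ε) + 1 := by
      have := mul_le_mul_of_nonneg_left hp1 (le_of_lt hcsq)
      linarith [hub2']
    have hp3 : f y ≤ f δ * f y := by nlinarith [hgtδ, hfypos]
    nlinarith [h, hp2, hp3]
  by_contra hcon
  push_neg at hcon
  have hε : (0:ℝ) < (f y - y - (f 1)^2) / (2 * (f 1)^2) := by
    apply div_pos
    · linarith
    · positivity
  have := hcore _ hε
  have h2 : (f 1)^2 * ((f y - y - (f 1)^2) / (2 * (f 1)^2)) = (f y - y - (f 1)^2)/2 := by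
    field_simp
  rw [h2] at this
  linarith

private lemma s14ceq (f : ℝ → ℝ) (hpos : ∀ x > 0, f x > 0)
    (hfe : ∀ x > 0, ∀ y > 0, f (x + f (x * y)) + y = f x * f y + 1) :
    f 1 = 2 := by
  have h2 := s14c2 f hpos hfe
  by_contra hne
  have hgt : 2 < f 1 := lt_of_le_of_ne h2 (Ne.symm hne)
  obtain ⟨n, hn⟩ := exists_nat_gt (((f 1)^2 - 1)/(f 1 - 2))
  have h3 := s14ub2 f hpos hfe (s14anc f n) (s14anc_pos f hpos n)
  have h4 := s14anc_val f hpos hfe n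
  have h5 := s14anc_lin f hpos hfe n
  have h6 := s14anc_ge f hpos hfe n
  rw [h5] at h4
  have h7 : (f 1 - 2) * s14anc f n ≤ (f 1)^2 - 1 := by nlinarith [h3, h4]
  have h8 : ((f 1)^2 - 1)/(f 1 - 2) < s14anc f n := by
    calc ((f 1)^2 - 1)/(f 1 - 2) < (n:ℝ) := hn
      _ ≤ (n:ℝ) + 1 := by linarith
      _ ≤ s14anc f n := h6
  rw [div_lt_iff₀ (by linarith)] at h8
  nlinarith
theorem stmt_14 (f : ℝ → ℝ) (hpos : ∀ x > 0, f x > 0)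
    (hfe : ∀ x > 0, ∀ y > 0, f (x + f (x * y)) + y = f x * f y + 1) :
    ∀ x > 0, f x = x + 1 := by
  intro a ha
  have hc := s14ceq f hpos hfe
  have hge := s14geid f hpos hfe a ha
  have hDlb : ∀ z : ℝ, 0 < z → z ≤ f z := fun z hz => s14geid f hpos hfe z hz
  have hDub : ∀ z : ℝ, 0 < z → f z ≤ z + 4 := by
    intro z hz
    have := s14ub2 f hpos hfe z hz
    rw [hc] at this
    norm_num at this
    linarith
  have hbpos : ∀ n, 0 < s14seq f a n := s14seq_pos f hpos a ha
  have hDinv : ∀ n, f (s14seq f a n) = s14seq f a n + 1 + (f a - a - 1) := by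
    intro n
    induction n with
    | zero =>
      rw [show s14seq f a 0 = a from rfl]
      ring
    | succ n ih =>
      have h1 : s14seq f a (n+1) = 1 + f (s14seq f a n) := rfl
      have h2 := s14B f hpos hfe (s14seq f a n) (hbpos n)
      rw [hc] at h2
      rw [h1, h2, ih]
      ring
  have hbgrow : ∀ n : ℕ, a + n ≤ s14seq f a n := by
    intro n
    induction n with
    | zero =>
      rw [show s14seq f a 0 = a from rfl]
      push_cast
      linarith
    | succ n ih =>
      have h1 : s14seq f a (n+1) = 1 + f (s14seq f a n) := rfl
      have h2 := hDinv n
      rw [h1]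
      push_cast
      push_cast at ih
      linarith [h2, hge]
  have hkey : ∀ n : ℕ,
      0 ≤ s14seq f a n * (f a - a - 1) + ((1 + (f a - a - 1)) * (a + 1 + (f a - a - 1)) + 1 - a)
      ∧ s14seq f a n * (f a - a - 1) + ((1 + (f a - a - 1)) * (a + 1 + (f a - a - 1)) + 1 - a) ≤ 8 := by
    intro n
    have h := hfe (s14seq f a n) (hbpos n) a ha
    have hw : 0 < s14seq f a n * a := mul_pos (hbpos n) ha
    have hw1 := hDlb _ hw
    have hw2 := hDub _ hw
    have hP : 0 < s14seq f a n + f (s14seq f a n * a) := by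
      have := hpos _ hw
      linarith [hbpos n]
    have hP1 := hDlb _ hP
    have hP2 := hDub _ hP
    have hfb := hDinv n
    have hexp : f (s14seq f a n) * f a = s14seq f a n * a + s14seq f a n
        + s14seq f a n * (f a - a - 1) + (1 + (f a - a - 1)) * (a + 1 + (f a - a - 1)) := by
      rw [hfb]
      ring
    constructor
    · nlinarith [h, hw1, hP1, hexp]
    · nlinarith [h, hw2, hP2, hw1, hexp]
  have hd0 : f a - a - 1 = 0 := by
    by_contra hdne
    rcases lt_or_gt_of_ne hdne with hneg | hposd
    · obtain ⟨n, hn⟩ := exists_nat_gt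
        (((1 + (f a - a - 1)) * (a + 1 + (f a - a - 1)) + 1 - a) / (-(f a - a - 1)))
      have h1 := (hkey n).1
      have h2 : s14seq f a n * (f a - a - 1) ≤ (a + n) * (f a - a - 1) :=
        mul_le_mul_of_nonpos_right (hbgrow n) (le_of_lt hneg)
      rw [div_lt_iff₀ (by linarith)] at hn
      nlinarith [h1, h2, hn, mul_neg_of_pos_of_neg ha hneg]
    · obtain ⟨n, hn⟩ := exists_nat_gt
        ((8 - ((1 + (f a - a - 1)) * (a + 1 + (f a - a - 1)) + 1 - a)) / (f a - a - 1))
      have h1 := (hkey n).2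
      have h2 : (a + n) * (f a - a - 1) ≤ s14seq f a n * (f a - a - 1) :=
        mul_le_mul_of_nonneg_right (hbgrow n) (le_of_lt hposd)
      rw [div_lt_iff₀ (by linarith)] at hn
      nlinarith [h1, h2, hn, mul_pos ha hposd]
  linarith
end

section
/- Let f : ℝ → ℝ be a monotone increasing function (x ≤ y implies f(x) ≤ f(y)) such that f(f(x²) + y + f(y)) = x² + 2·f(y) for all x, y ∈ ℝ. Then f(x) = x for all x ∈ ℝ. -/
theorem stmt_16 (f : ℝ → ℝ) (hmono : Monotone f)
    (hfe : ∀ x y : ℝ, f (f (x ^ 2) + y + f y) = x ^ 2 + 2 * f y) :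
    ∀ x : ℝ, f x = x := by
  -- basic substitution : for s ≥ 0, plug x = √s
  have hP : ∀ s y : ℝ, 0 ≤ s → f (f s + y + f y) = s + 2 * f y := by
    intro s y hs
    have h := hfe (Real.sqrt s) y
    rw [Real.sq_sqrt hs] at h
    exact h
  set c : ℝ := f 0 with hc
  have S1 : ∀ s : ℝ, 0 ≤ s → f (f s + c) = s + 2 * c := by
    intro s hs
    have h := hP s 0 hs
    simpa using h
  -- injectivity on [0, ∞)
  have hinj : ∀ a b : ℝ, 0 ≤ a → 0 ≤ b → f a = f b → a = b := by
    intro a b ha hb hab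
    have h1 := hP a 0 ha
    have h2 := hP b 0 hb
    rw [hab] at h1
    rw [h1] at h2
    linarith
  have hf2c : f (c + c) = 2 * c := by
    have h := S1 0 le_rfl
    simpa using h
  have hc0 : c = 0 := by
    rcases lt_trichotomy c 0 with hneg | h0 | hpos
    · -- c < 0 : derive upper and lower linear bounds, then a contradiction by iteration
      exfalso
      have hub : ∀ s : ℝ, 0 ≤ s → f s + c < s := by
        intro s hs
        by_contra h
        push_neg at h
        have h1 : f s ≤ f (f s + c) := hmono (by linarith)
        have h2 := S1 s hs
        linarith
      have hlb : ∀ s : ℝ, 0 ≤ s → s + 2 * c ≤ f s := by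
        intro s hs
        have h1 := hub s hs
        have h2 : f (f s + c) ≤ f s := hmono (le_of_lt h1)
        have h3 := S1 s hs
        linarith
      have key : ∀ s : ℝ, -6 * c ≤ s → f (s + 2 * c) = f s + 3 * c := by
        intro s hs
        have hs0 : (0 : ℝ) ≤ s := by linarith
        have h1 := hP s (c + c) hs0
        rw [hf2c] at h1
        have hs2 : (0 : ℝ) ≤ s + 2 * c := by linarith
        have h2 := S1 (s + 2 * c) hs2
        have ha : (0 : ℝ) ≤ f s + (c + c) + 2 * c := by
          have := hlb s hs0; linarith
        have hb : (0 : ℝ) ≤ f (s + 2 * c) + c := by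
          have := hlb (s + 2 * c) hs2; linarith
        have heq : f (f s + (c + c) + 2 * c) = f (f (s + 2 * c) + c) := by
          rw [h1, h2]; ring
        have := hinj _ _ ha hb heq
        linarith
      -- iterate upward : f (-4c + n·(-2c)) = f (-4c) + n·(-3c)
      have iter : ∀ n : ℕ, f (-4 * c + n * (-2 * c)) = f (-4 * c) + n * (-3 * c) := by
        intro n
        induction n with
        | zero => simp
        | succ n ih =>
          have hkey := key (-4 * c + (n + 1 : ℕ) * (-2 * c)) (by
            push_cast
            nlinarith [Nat.cast_nonneg (α := ℝ) n, hneg])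
          have harg : -4 * c + ((n + 1 : ℕ) : ℝ) * (-2 * c) + 2 * c
              = -4 * c + (n : ℝ) * (-2 * c) := by push_cast; ring
          rw [harg] at hkey
          rw [ih] at hkey
          have : f (-4 * c + ((n + 1 : ℕ) : ℝ) * (-2 * c))
              = f (-4 * c) + (n : ℝ) * (-3 * c) - 3 * c := by linarith
          rw [this]; push_cast; ring
      obtain ⟨n, hn⟩ := exists_nat_gt ((-5 * c - f (-4 * c)) / (-c))
      have hcpos : (0 : ℝ) < -c := by linarith
      have hn' : -5 * c - f (-4 * c) < (n : ℝ) * (-c) := by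
        rw [div_lt_iff₀ hcpos] at hn
        linarith
      have hsn : (0 : ℝ) ≤ -4 * c + n * (-2 * c) := by
        nlinarith [Nat.cast_nonneg (α := ℝ) n]
      have hub' := hub _ hsn
      rw [iter n] at hub'
      nlinarith [Nat.cast_nonneg (α := ℝ) n]
    · exact h0
    · -- c > 0 : f (5c) = f (3c) = 4c forces c = 0
      exfalso
      have h1 := hP 0 (c + c) le_rfl
      rw [hf2c] at h1
      have h2 := S1 (c + c) (by linarith)
      rw [hf2c] at h2
      -- h1 : f (f 0 + (c+c) + 2c) = 0 + 2*(2c) ; f 0 = c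
      have h1' : f (c + (c + c) + 2 * c) = 0 + 2 * (2 * c) := h1
      have heq : f (c + (c + c) + 2 * c) = f (2 * c + c) := by
        rw [h1', h2]; ring
      have := hinj _ _ (by linarith) (by linarith) heq
      linarith
  -- now f 0 = 0 and f (f s) = s for s ≥ 0, hence f = id on [0,∞)
  have hid : ∀ s : ℝ, 0 ≤ s → f s = s := by
    intro s hs
    have h1 := S1 s hs
    rw [hc0] at h1
    simp at h1
    rcases lt_trichotomy (f s) s with h | h | h
    · have := hmono (le_of_lt h)
      linarith
    · exact h
    · have := hmono (le_of_lt h)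
      linarith
  intro x
  set s : ℝ := max 0 (-(x + f x)) + 1 with hsdef
  have hs0 : (0 : ℝ) ≤ s := add_nonneg (le_max_left _ _) zero_le_one
  have h1 := hP s x hs0
  rw [hid s hs0] at h1
  have harg : (0 : ℝ) ≤ s + x + f x := by
    have := le_max_right (0 : ℝ) (-(x + f x))
    simp only [hsdef]; linarith
  rw [hid _ harg] at h1
  linarith
end

section
/- Let f : ℝ⁺ → ℝ⁺ be a function such that f(x)·f(y) = 2·f(x + y·f(x)) for all x, y > 0. Then f(x) = 2 for all x > 0. -/
theorem stmt_17 (f : ℝ → ℝ) (hpos : ∀ x > 0, f x > 0)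
    (hfe : ∀ x > 0, ∀ y > 0, f x * f y = 2 * f (x + y * f x)) :
    ∀ x > 0, f x = 2 := by
  -- Step 1: f is nondecreasing on (0, ∞)
  have mono : ∀ a b : ℝ, 0 < b → b ≤ a → f b ≤ f a := by
    intro a b hb hba
    by_contra h
    push_neg at h
    have ha : (0:ℝ) < a := lt_of_lt_of_le hb hba
    have hlt : b < a := by
      rcases lt_or_eq_of_le hba with h' | h'
      · exact h'
      · exact absurd h (by rw [h']; exact lt_irrefl _)
    have hd : 0 < f b - f a := sub_pos.mpr h
    set y := (a - b) / (f b - f a) with hy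
    have hy0 : 0 < y := div_pos (sub_pos.mpr hlt) hd
    have hmul : y * (f b - f a) = a - b := div_mul_cancel₀ _ (ne_of_gt hd)
    have hpt : a + y * f a = b + y * f b := by nlinarith [hmul]
    have e1 := hfe a ha y hy0
    have e2 := hfe b hb y hy0
    rw [hpt] at e1
    have hfy : 0 < f y := hpos y hy0
    have : f a = f b := by
      have : f a * f y = f b * f y := by linarith
      exact mul_right_cancel₀ (ne_of_gt hfy) this
    linarith
  have hf1 : 0 < f 1 := hpos 1 one_pos
  set A : ℝ := 1 + 1 * f 1 with hA
  have hApos : 0 < A := by rw [hA]; linarith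
  -- Step 2: doubling identity f(A+t) = f(A+2t)
  have dbl : ∀ t : ℝ, 0 < t → f (A + t) = f (A + 2 * t) := by
    intro t ht
    have hf1sq : 0 < f 1 * f 1 := mul_pos hf1 hf1
    set z : ℝ := 2 * t / (f 1 * f 1) with hz
    have hz0 : 0 < z := div_pos (by linarith) hf1sq
    have hzf : z * (f 1 * f 1) = 2 * t := div_mul_cancel₀ _ (ne_of_gt hf1sq)
    have eq1 : f 1 * f 1 = 2 * f A := by
      have := hfe 1 one_pos 1 one_pos
      rw [hA]; simpa using this
    have hfA : f A = f 1 * f 1 / 2 := by linarith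
    have eq2 := hfe A hApos z hz0
    have hpt1 : A + z * f A = A + t := by
      rw [hfA]
      have : z * (f 1 * f 1 / 2) = t := by
        field_simp
        linarith [hzf]
      linarith [this]
    rw [hpt1] at eq2
    have hz1 : 0 < 1 + z * f 1 := by positivity
    have eq3 := hfe 1 one_pos z hz0
    have eq4 := hfe 1 one_pos (1 + z * f 1) hz1
    have hpt2 : 1 + (1 + z * f 1) * f 1 = A + 2 * t := by
      rw [hA]; nlinarith [hzf]
    rw [hpt2] at eq4
    -- eq2 : f A * f z = 2 * f (A + t)
    -- eq3 : f 1 * f z = 2 * f (1 + z * f 1)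
    -- eq4 : f 1 * f (1 + z * f 1) = 2 * f (A + 2*t)
    have h1 : f (A + t) = f 1 * f 1 * f z / 4 := by
      rw [hfA] at eq2; linarith
    have h2 : f (A + 2 * t) = f 1 * f 1 * f z / 4 := by nlinarith [eq3, eq4]
    rw [h1, h2]
  -- Step 3: iterate the doubling
  have iter : ∀ n : ℕ, ∀ t : ℝ, 0 < t → f (A + t) = f (A + 2 ^ n * t) := by
    intro n
    induction n with
    | zero => intro t ht; norm_num
    | succ k ih =>
      intro t ht
      have h1 := ih t ht
      have h2 := dbl (2 ^ k * t) (by positivity)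
      rw [h1, h2]
      ring_nf
  -- Step 4: f is constant on (A, ∞)
  have tailconst : ∀ u v : ℝ, A < u → u ≤ v → f u = f v := by
    intro u v hu huv
    have hupos : 0 < u := lt_trans hApos hu
    have hvpos : 0 < v := lt_of_lt_of_le hupos huv
    have hle : f u ≤ f v := mono v u hupos huv
    have hut : 0 < u - A := sub_pos.mpr hu
    obtain ⟨n, hn⟩ := pow_unbounded_of_one_lt ((v - A) / (u - A)) (by norm_num : (1:ℝ) < 2)
    have hn' : v - A < 2 ^ n * (u - A) := by
      rw [div_lt_iff₀ hut] at hn; linarith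
    have h1 : f u = f (A + 2 ^ n * (u - A)) := by
      have := iter n (u - A) hut
      rw [show A + (u - A) = u by ring] at this
      exact this
    have h2 : f v ≤ f (A + 2 ^ n * (u - A)) :=
      mono (A + 2 ^ n * (u - A)) v hvpos (by linarith)
    linarith [h1, h2]
  -- Step 5: the constant is 2
  have hA1 : A < A + 1 := by linarith
  have hA1pos : 0 < A + 1 := by linarith
  have hfA1pos : 0 < f (A + 1) := hpos _ hA1pos
  have hK : f (A + 1) = 2 := by
    have e := hfe (A + 1) hA1pos (A + 1) hA1pos
    have hq : f ((A + 1) + (A + 1) * f (A + 1)) = f (A + 1) := by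
      have := tailconst (A + 1) ((A + 1) + (A + 1) * f (A + 1)) hA1
        (by nlinarith [hfA1pos])
      linarith [this]
    rw [hq] at e
    have : f (A + 1) * (f (A + 1) - 2) = 0 := by linear_combination e
    rcases mul_eq_zero.mp this with h | h
    · exact absurd h (ne_of_gt hfA1pos)
    · linarith
  -- Step 6: conclude
  intro x hx
  have hfx : 0 < f x := hpos x hx
  set y : ℝ := A + 1 + (A + 1) / f x with hy
  have hy0 : 0 < y := by positivity
  have hfy : f y = 2 := by
    have := tailconst (A + 1) y hA1 (by
      rw [hy]
      have : 0 < (A + 1) / f x := by positivity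
      linarith)
    rw [← this, hK]
  have hpt : A + 1 ≤ x + y * f x := by
    have h1 : y * f x = (A + 1) * f x + (A + 1) := by
      rw [hy]; field_simp
    nlinarith [mul_pos hA1pos hfx]
  have hfq : f (x + y * f x) = 2 := by
    have := tailconst (A + 1) (x + y * f x) hA1 hpt
    rw [← this, hK]
  have e := hfe x hx y hy0
  rw [hfy, hfq] at e
  linarith
end

section
/- Let f : ℝ⁺ → ℝ⁺ be a function such that f(y·(f(x))³ + x) = x³·f(y) + f(x) for all x, y > 0. Then f(x) = x for all x > 0. -/
/-- Auxiliary sequence: a 0 = 1, a (n+1) = c^3 * a n + 1. -/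
def stmt18Seq (c : ℝ) : ℕ → ℝ
  | 0 => 1
  | n + 1 => c ^ 3 * stmt18Seq c n + 1

theorem stmt_18 (f : ℝ → ℝ) (hpos : ∀ x > 0, f x > 0)
    (hfe : ∀ x > 0, ∀ y > 0, f (y * (f x) ^ 3 + x) = x ^ 3 * f y + f x) :
    ∀ x > 0, f x = x := by
  -- f is strictly increasing on positives
  have hmono : ∀ a b : ℝ, 0 < a → a < b → f a < f b := by
    intro a b ha hab
    have hfa := hpos a ha
    have hfa3 : (0:ℝ) < (f a) ^ 3 := by positivity
    have hy : 0 < (b - a) / (f a) ^ 3 := div_pos (by linarith) hfa3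
    have h := hfe a ha _ hy
    have harg : (b - a) / (f a) ^ 3 * (f a) ^ 3 + a = b := by field_simp; ring
    rw [harg] at h
    have hfy := hpos _ hy
    nlinarith [pow_pos ha 3]
  have hmole : ∀ a b : ℝ, 0 < a → a ≤ b → f a ≤ f b := by
    intro a b ha hab
    rcases eq_or_lt_of_le hab with rfl | h
    · exact le_rfl
    · exact (hmono a b ha h).le
  have hc : 0 < f 1 := hpos 1 one_pos
  -- f 1 ≥ 1
  have hc1 : 1 ≤ f 1 := by
    by_contra h
    push_neg at h
    have hc3 : (f 1) ^ 3 < 1 := pow_lt_one₀ hc.le h (by norm_num)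
    have hden : (0:ℝ) < 1 - (f 1) ^ 3 := by linarith
    have hy : (0:ℝ) < 1 / (1 - (f 1) ^ 3) := by positivity
    have heq := hfe 1 one_pos _ hy
    have harg : 1 / (1 - (f 1) ^ 3) * (f 1) ^ 3 + 1 = 1 / (1 - (f 1) ^ 3) := by
      field_simp; ring
    rw [harg] at heq
    nlinarith [heq]
  -- crucial inequality: for x > 1, x * (f 1)^3 + 1 < (f x)^3 + x
  have hkey : ∀ x : ℝ, 1 < x → x * (f 1) ^ 3 + 1 < (f x) ^ 3 + x := by
    intro x hx1
    have hx : (0:ℝ) < x := by linarith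
    have hfx := hpos x hx
    have hw1 : (0:ℝ) < (f 1) ^ 3 + 1 := by positivity
    have hA := hfe x hx _ hw1
    have hfc : f ((f 1) ^ 3 + 1) = 2 * f 1 := by
      have h1 := hfe 1 one_pos 1 one_pos
      have : (1:ℝ) * (f 1) ^ 3 + 1 = (f 1) ^ 3 + 1 := by ring
      rw [this] at h1
      linarith [h1]
    rw [hfc] at hA
    -- hA : f (((f 1)^3 + 1) * (f x)^3 + x) = x^3 * (2 * f 1) + f x
    have hB0 : f ((f x) ^ 3 + x) = x ^ 3 * f 1 + f x := by
      have h1 := hfe x hx 1 one_pos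
      have : (1:ℝ) * (f x) ^ 3 + x = (f x) ^ 3 + x := by ring
      rw [this] at h1
      linarith [h1]
    have hB := hfe 1 one_pos ((f x) ^ 3 + x) (by positivity)
    rw [hB0] at hB
    -- hB : f (((f x)^3 + x) * (f 1)^3 + 1) = 1^3 * (x^3 * f 1 + f x) + f 1
    by_contra hcon
    push_neg at hcon
    have hle : ((f 1) ^ 3 + 1) * (f x) ^ 3 + x ≤ ((f x) ^ 3 + x) * (f 1) ^ 3 + 1 := by
      nlinarith
    have hfle := hmole _ _ (by positivity) hle
    rw [hA, hB] at hfle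
    have hx3 : 1 < x ^ 3 := one_lt_pow₀ hx1 (by norm_num)
    nlinarith [hfle, mul_pos hc (sub_pos.mpr hx3)]
  -- f 1 ≤ 1
  have hc2 : f 1 ≤ 1 := by
    by_contra h
    push_neg at h
    set c := f 1 with hc_def
    have he : 0 < c ^ 3 - 1 := by
      have := one_lt_pow₀ h (by norm_num : 3 ≠ 0)
      linarith
    have hA1 : ∀ n, 1 ≤ stmt18Seq c n := by
      intro n
      induction n with
      | zero => simp [stmt18Seq]
      | succ n ih =>
        have : 0 < c ^ 3 := by positivity
        simp only [stmt18Seq]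
        nlinarith
    have hAgt : ∀ n, c ^ (3 * n) ≤ stmt18Seq c n := by
      intro n
      induction n with
      | zero => simp [stmt18Seq]
      | succ n ih =>
        have hc3 : 0 < c ^ 3 := by positivity
        have : c ^ (3 * (n + 1)) = c ^ (3 * n) * c ^ 3 := by ring
        rw [this]
        simp only [stmt18Seq]
        nlinarith [pow_pos hc (3 * n)]
    have hAf : ∀ n, f (stmt18Seq c n) = ((n:ℝ) + 1) * c := by
      intro n
      induction n with
      | zero => simp [stmt18Seq, hc_def]
      | succ n ih =>
        have hpos' : 0 < stmt18Seq c n := lt_of_lt_of_le one_pos (hA1 n)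
        have h1 := hfe 1 one_pos _ hpos'
        have harg : stmt18Seq c n * (f 1) ^ 3 + 1 = stmt18Seq c (n + 1) := by
          simp only [stmt18Seq]; rw [← hc_def]; ring
        rw [harg] at h1
        rw [h1, ih]
        push_cast
        ring
    have hAgt1 : ∀ n, 1 < stmt18Seq c (n + 1) := by
      intro n
      have h1 := hA1 n
      have : 0 < c ^ 3 := by positivity
      simp only [stmt18Seq]
      nlinarith
    -- main inequality
    have hmain : ∀ m : ℕ, 1 ≤ m → c ^ (3 * m) * (c ^ 3 - 1) < (((m:ℝ) + 1) * c) ^ 3 := by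
      intro m hm
      obtain ⟨n, rfl⟩ : ∃ n, m = n + 1 := ⟨m - 1, by omega⟩
      have hk := hkey (stmt18Seq c (n + 1)) (hAgt1 n)
      have hfv := hAf (n + 1)
      have hAg := hAgt (n + 1)
      push_cast at hfv ⊢
      rw [hfv] at hk
      nlinarith [hA1 (n + 1)]
    -- contradiction via exponential growth
    obtain ⟨k, hk⟩ := exists_nat_gt (max 1 (125 * c ^ 3 / (c ^ 3 - 1) ^ 5))
    have hk1 : (1:ℝ) ≤ (k:ℝ) := le_of_lt (lt_of_le_of_lt (le_max_left _ _) hk)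
    have hke : 125 * c ^ 3 < (k:ℝ) * (c ^ 3 - 1) ^ 5 := by
      have h2 : 125 * c ^ 3 / (c ^ 3 - 1) ^ 5 < (k:ℝ) :=
        lt_of_le_of_lt (le_max_right _ _) hk
      have he5 : 0 < (c ^ 3 - 1) ^ 5 := by positivity
      calc 125 * c ^ 3 = 125 * c ^ 3 / (c ^ 3 - 1) ^ 5 * (c ^ 3 - 1) ^ 5 := by
            field_simp
        _ < (k:ℝ) * (c ^ 3 - 1) ^ 5 := by
            exact mul_lt_mul_of_pos_right h2 he5
    have hb : 1 + (k:ℝ) * (c ^ 3 - 1) ≤ (1 + (c ^ 3 - 1)) ^ k :=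
      one_add_mul_le_pow (by nlinarith) k
    have h1e : (1:ℝ) + (c ^ 3 - 1) = c ^ 3 := by ring
    rw [h1e] at hb
    have hbk : (k:ℝ) * (c ^ 3 - 1) ≤ (c ^ 3) ^ k := by linarith
    have hk1n : 1 ≤ k := by exact_mod_cast hk1
    have hM := hmain (4 * k) (by omega)
    have hexp : c ^ (3 * (4 * k)) = ((c ^ 3) ^ k) ^ 4 := by ring
    rw [hexp] at hM
    have hkenn : 0 ≤ (k:ℝ) * (c ^ 3 - 1) := by nlinarith
    have hs4 : ((k:ℝ) * (c ^ 3 - 1)) ^ 4 ≤ ((c ^ 3) ^ k) ^ 4 :=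
      pow_le_pow_left₀ hkenn hbk 4
    have hcast : ((4 * k : ℕ):ℝ) = 4 * (k:ℝ) := by push_cast; ring
    rw [hcast] at hM
    -- combine
    have h5 : (4 * (k:ℝ) + 1) ≤ 5 * (k:ℝ) := by linarith
    have h53 : (4 * (k:ℝ) + 1) ^ 3 ≤ (5 * (k:ℝ)) ^ 3 :=
      pow_le_pow_left₀ (by linarith) h5 3
    have hkR : (0:ℝ) < (k:ℝ) := by linarith
    have s1 : (4 * (k:ℝ) + 1) ^ 3 * c ^ 3 ≤ (5 * (k:ℝ)) ^ 3 * c ^ 3 :=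
      mul_le_mul_of_nonneg_right h53 (pow_pos hc 3).le
    have s2 : (k:ℝ) ^ 3 * (125 * c ^ 3) < (k:ℝ) ^ 3 * ((k:ℝ) * (c ^ 3 - 1) ^ 5) :=
      mul_lt_mul_of_pos_left hke (pow_pos hkR 3)
    have s3 : ((k:ℝ) * (c ^ 3 - 1)) ^ 4 * (c ^ 3 - 1) ≤ ((c ^ 3) ^ k) ^ 4 * (c ^ 3 - 1) :=
      mul_le_mul_of_nonneg_right hs4 he.le
    linarith [hM, s1, s2, s3]
  have hf1 : f 1 = 1 := le_antisymm hc2 hc1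
  -- additivity by one
  have hadd : ∀ y : ℝ, 0 < y → f (y + 1) = f y + 1 := by
    intro y hy
    have h := hfe 1 one_pos y hy
    rw [hf1] at h
    simpa using h
  have haddn : ∀ y : ℝ, 0 < y → ∀ n : ℕ, f (y + n) = f y + n := by
    intro y hy n
    induction n with
    | zero => simp
    | succ n ih =>
      have h1 : y + ((n:ℝ) + 1) = (y + n) + 1 := by ring
      push_cast
      rw [h1, hadd (y + n) (by positivity), ih]
      ring
  have hnat : ∀ n : ℕ, f ((n:ℝ) + 1) = (n:ℝ) + 1 := by
    intro n
    have h := haddn 1 one_pos n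
    rw [hf1] at h
    rw [add_comm ((n:ℝ)) 1]
    linarith [h]
  -- f ((n+1)^3 * y) = (n+1)^3 * f y
  have hcube : ∀ n : ℕ, ∀ y : ℝ, 0 < y →
      f (((n:ℝ) + 1) ^ 3 * y) = ((n:ℝ) + 1) ^ 3 * f y := by
    intro n y hy
    have hN : (0:ℝ) < (n:ℝ) + 1 := by positivity
    have h1 := hfe ((n:ℝ) + 1) hN y hy
    rw [hnat n] at h1
    have h2 := haddn (y * ((n:ℝ) + 1) ^ 3) (by positivity) (n + 1)
    have hcast : ((n + 1 : ℕ):ℝ) = (n:ℝ) + 1 := by push_cast; ring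
    rw [hcast] at h2
    rw [h2] at h1
    have : f (y * ((n:ℝ) + 1) ^ 3) = ((n:ℝ) + 1) ^ 3 * f y := by linarith
    rw [mul_comm] at this
    exact this
  -- f fixes positive rationals k / (n+1)^3
  have hrat : ∀ k n : ℕ, 0 < k →
      f ((k:ℝ) / ((n:ℝ) + 1) ^ 3) = (k:ℝ) / ((n:ℝ) + 1) ^ 3 := by
    intro k n hk
    have hkR : (0:ℝ) < (k:ℝ) := by exact_mod_cast hk
    have hN : (0:ℝ) < (n:ℝ) + 1 := by positivity
    have hN3 : (0:ℝ) < ((n:ℝ) + 1) ^ 3 := by positivity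
    have hy : (0:ℝ) < (k:ℝ) / ((n:ℝ) + 1) ^ 3 := by positivity
    have h1 := hcube n _ hy
    have harg : ((n:ℝ) + 1) ^ 3 * ((k:ℝ) / ((n:ℝ) + 1) ^ 3) = (k:ℝ) := by
      field_simp
    rw [harg] at h1
    have hfk : f (k:ℝ) = (k:ℝ) := by
      obtain ⟨k', rfl⟩ : ∃ k', k = k' + 1 := ⟨k - 1, by omega⟩
      have := hnat k'
      push_cast
      push_cast at this
      linarith [this]
    rw [hfk] at h1
    field_simp
    linarith [h1]
  -- squeeze
  intro x hx
  have hupper : f x ≤ x := by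
    by_contra h
    push_neg at h
    obtain ⟨n, hn⟩ := exists_nat_gt (1 / (f x - x))
    set N : ℝ := (n:ℝ) + 1 with hN_def
    have hNpos : (0:ℝ) < N := by positivity
    have hN3 : (0:ℝ) < N ^ 3 := by positivity
    have hNgt : 1 / (f x - x) < N := by
      have : (n:ℝ) < N := by simp [hN_def]
      linarith
    have hN1 : (1:ℝ) ≤ N := by
      rw [hN_def]
      have := Nat.cast_nonneg (α := ℝ) n
      linarith
    set k : ℕ := ⌊x * N ^ 3⌋₊ with hk_def
    have hxN : (0:ℝ) ≤ x * N ^ 3 := by positivity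
    have hklt : x * N ^ 3 < (k:ℝ) + 1 := Nat.lt_floor_add_one _
    have hkle : (k:ℝ) ≤ x * N ^ 3 := Nat.floor_le hxN
    have hlt : x < ((k:ℝ) + 1) / N ^ 3 := by
      rw [lt_div_iff₀ hN3]; linarith
    have hfr := hrat (k + 1) n (by omega)
    have hcast : ((k + 1 : ℕ):ℝ) = (k:ℝ) + 1 := by push_cast; ring
    rw [hcast] at hfr
    have hflt : f x < ((k:ℝ) + 1) / N ^ 3 := by
      have := hmono x _ hx hlt
      rw [hfr] at this
      exact this
    have hfltN : f x * N ^ 3 < (k:ℝ) + 1 := (lt_div_iff₀ hN3).1 hflt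
    have hsmallN : 1 < N * (f x - x) := (div_lt_iff₀ (sub_pos.2 h)).1 hNgt
    have hN3ge : N ≤ N ^ 3 := le_self_pow₀ hN1 (by norm_num)
    have hprod : 0 ≤ (N ^ 3 - N) * (f x - x) :=
      mul_nonneg (by linarith) (by linarith)
    linarith [hfltN, hkle, hsmallN, hprod]
  have hlower : x ≤ f x := by
    by_contra h
    push_neg at h
    obtain ⟨n, hn⟩ := exists_nat_gt (max (2 / (x - f x)) (1 / x))
    set N : ℝ := (n:ℝ) + 1 with hN_def
    have hNpos : (0:ℝ) < N := by positivity
    have hN3 : (0:ℝ) < N ^ 3 := by positivity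
    have hN1 : (1:ℝ) ≤ N := by
      rw [hN_def]
      have := Nat.cast_nonneg (α := ℝ) n
      linarith
    have hNgt2 : 2 / (x - f x) < N := by
      have h1 : 2 / (x - f x) ≤ max (2 / (x - f x)) (1 / x) := le_max_left _ _
      have : (n:ℝ) < N := by simp [hN_def]
      linarith
    have hNgtx : 1 / x < N := by
      have h1 : 1 / x ≤ max (2 / (x - f x)) (1 / x) := le_max_right _ _
      have : (n:ℝ) < N := by simp [hN_def]
      linarith
    have hxN1 : (1:ℝ) < x * N ^ 3 := by
      have hN3ge' : N ≤ N ^ 3 := le_self_pow₀ hN1 (by norm_num)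
      have h1 : 1 / x < N ^ 3 := lt_of_lt_of_le hNgtx hN3ge'
      rw [div_lt_iff₀ hx] at h1
      linarith [h1]
    set k0 : ℕ := ⌈x * N ^ 3⌉₊ with hk0_def
    have hk02 : 2 ≤ k0 := by
      have : 1 < k0 := by
        rw [hk0_def]
        exact_mod_cast Nat.lt_ceil.mpr (by exact_mod_cast hxN1)
      omega
    have hk0le : (k0:ℝ) < x * N ^ 3 + 1 := by
      have := Nat.ceil_lt_add_one (by positivity : (0:ℝ) ≤ x * N ^ 3)
      exact_mod_cast this
    have hk0ge : x * N ^ 3 ≤ (k0:ℝ) := Nat.le_ceil _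
    set k : ℕ := k0 - 1 with hk_def
    have hkc : (k:ℝ) = (k0:ℝ) - 1 := by
      rw [hk_def]
      push_cast [Nat.cast_sub (by omega : 1 ≤ k0)]
      ring
    have hkpos : 0 < k := by omega
    have hfr := hrat k n hkpos
    have hklt : (k:ℝ) / N ^ 3 < x := by
      rw [div_lt_iff₀ hN3]
      rw [hkc]
      linarith
    have hkposR : (0:ℝ) < (k:ℝ) / N ^ 3 := by
      have : (0:ℝ) < (k:ℝ) := by exact_mod_cast hkpos
      positivity
    have hfgt : (k:ℝ) / N ^ 3 < f x := by
      have := hmono _ x hkposR hklt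
      rw [hfr] at this
      exact this
    have hfgtN : (k:ℝ) < f x * N ^ 3 := (div_lt_iff₀ hN3).1 hfgt
    have hkge : x * N ^ 3 - 1 ≤ (k:ℝ) := by rw [hkc]; linarith
    have hsmallN : 2 < N * (x - f x) := (div_lt_iff₀ (sub_pos.2 h)).1 hNgt2
    have hN3ge : N ≤ N ^ 3 := le_self_pow₀ hN1 (by norm_num)
    have hprod : 0 ≤ (N ^ 3 - N) * (x - f x) :=
      mul_nonneg (by linarith) (by linarith)
    linarith [hfgtN, hkge, hsmallN, hprod]
  linarith
end

section
/- Let f, g, h : ℝ⁺ → ℝ⁺ be functions such that f(g(x) + y) = h(x) + f(y) for all x, y > 0. Then the function x ↦ g(x)/h(x) is constant on ℝ⁺, i.e. there exists a constant c > 0 with g(x) = c·h(x) for all x > 0. -/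
theorem stmt_19 (f g h : ℝ → ℝ)
    (hfpos : ∀ x > 0, f x > 0) (hgpos : ∀ x > 0, g x > 0)
    (hhpos : ∀ x > 0, h x > 0)
    (hfe : ∀ x > 0, ∀ y > 0, f (g x + y) = h x + f y) :
    ∃ c > 0, ∀ x > 0, g x = c * h x := by
  have iter : ∀ x > 0, ∀ (n : ℕ), ∀ y > 0, f ((n : ℝ) * g x + y) = (n : ℝ) * h x + f y := by
    intro x hx n
    induction n with
    | zero => intro y hy; simp
    | succ n ih =>
      intro y hy
      have hgx := hgpos x hx
      have h2 : (n : ℝ) * g x + y > 0 := by positivity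
      have h1 : ((n : ℝ) + 1) * g x + y = g x + ((n : ℝ) * g x + y) := by ring
      push_cast
      rw [h1, hfe x hx _ h2, ih y hy]
      ring
  have hApos : g 1 > 0 := hgpos 1 one_pos
  have hHpos : h 1 > 0 := hhpos 1 one_pos
  have hf1 : f 1 > 0 := hfpos 1 one_pos
  refine ⟨g 1 / h 1, by positivity, ?_⟩
  intro x hx
  have hB : g x > 0 := hgpos x hx
  have hK : h x > 0 := hhpos x hx
  have key : h x * g 1 = g x * h 1 := by
    by_contra hne
    set d := h x * g 1 - g x * h 1 with hd
    have hd0 : d ≠ 0 := sub_ne_zero.mpr hne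
    set C := g 1 * (h 1 + f 1) with hC
    have hCpos : C > 0 := by positivity
    have bound : ∀ n : ℕ, |(n : ℝ) * d| < C := by
      intro n
      set m := ⌊(n : ℝ) * g x / g 1⌋₊ with hm
      have hdivnn : 0 ≤ (n : ℝ) * g x / g 1 := by positivity
      have hm1 : (m : ℝ) * g 1 ≤ (n : ℝ) * g x := by
        have := Nat.floor_le hdivnn
        rw [le_div_iff₀ hApos] at this
        linarith
      have hm2 : (n : ℝ) * g x < ((m : ℝ) + 1) * g 1 := by
        have := Nat.lt_floor_add_one ((n : ℝ) * g x / g 1)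
        rw [div_lt_iff₀ hApos] at this
        linarith
      -- lower bound: n * h x > m * h 1 - f 1
      have hz : (n : ℝ) * g x - (m : ℝ) * g 1 + 1 > 0 := by linarith
      have e1 : f ((n : ℝ) * g x + 1) = (n : ℝ) * h x + f 1 := iter x hx n 1 one_pos
      have e2 : f ((m : ℝ) * g 1 + ((n : ℝ) * g x - (m : ℝ) * g 1 + 1))
          = (m : ℝ) * h 1 + f ((n : ℝ) * g x - (m : ℝ) * g 1 + 1) := iter 1 one_pos m _ hz
      have e2' : (m : ℝ) * g 1 + ((n : ℝ) * g x - (m : ℝ) * g 1 + 1) = (n : ℝ) * g x + 1 := by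
        ring
      rw [e2', e1] at e2
      have hfz := hfpos _ hz
      have low : (n : ℝ) * h x > (m : ℝ) * h 1 - f 1 := by linarith
      -- upper bound: n * h x < (m+1) * h 1 + f 1
      have hw : ((m : ℝ) + 1) * g 1 - (n : ℝ) * g x + 1 > 0 := by linarith
      have e3 : f (((m : ℝ) + 1) * g 1 + 1) = ((m : ℝ) + 1) * h 1 + f 1 := by
        have := iter 1 one_pos (m + 1) 1 one_pos
        push_cast at this
        exact this
      have e4 : f ((n : ℝ) * g x + (((m : ℝ) + 1) * g 1 - (n : ℝ) * g x + 1))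
          = (n : ℝ) * h x + f (((m : ℝ) + 1) * g 1 - (n : ℝ) * g x + 1) := iter x hx n _ hw
      have e4' : (n : ℝ) * g x + (((m : ℝ) + 1) * g 1 - (n : ℝ) * g x + 1)
          = ((m : ℝ) + 1) * g 1 + 1 := by ring
      rw [e4', e3] at e4
      have hfw := hfpos _ hw
      have upp : (n : ℝ) * h x < ((m : ℝ) + 1) * h 1 + f 1 := by linarith
      have hnd : (n : ℝ) * d = (n : ℝ) * h x * g 1 - (n : ℝ) * g x * h 1 := by
        rw [hd]; ring
      rw [abs_lt, hnd, hC]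
      have p1 := mul_lt_mul_of_pos_right low hApos
      have p2 := mul_lt_mul_of_pos_right upp hApos
      have p3 := mul_le_mul_of_nonneg_right hm1 hHpos.le
      have p4 := mul_lt_mul_of_pos_right hm2 hHpos
      constructor
      · ring_nf at p1 p4 ⊢
        linarith
      · ring_nf at p2 p3 ⊢
        linarith
    obtain ⟨n, hn⟩ := exists_nat_gt (C / |d|)
    have habs : |d| > 0 := abs_pos.mpr hd0
    have : C < (n : ℝ) * |d| := (div_lt_iff₀ habs).mp hn
    have := bound n
    rw [abs_mul, Nat.abs_cast] at this
    linarith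
  field_simp
  linarith [key]
end
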